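/- Let X be a Hilbert A–A pro-C*-bimodule. If X is viewed as a pro-C*-correspondence over A (with left action φ_X(a)x = ax), then 𝒥_X = _AI. -/

import Mathlib

/-!
Self-contained toolkit for formalizing the paper
"A construction of pro-C*-algebras from pro-C*-correspondences"
(M. Joiţa, I. Zarakas).

A pro-C*-algebra is encoded by an (upward directed) family of C*-seminorms
`p : Λ → Seminorm ℂ A` on a star `ℂ`-algebra, which is separating (Hausdorff)
and complete (every filter that is Cauchy with respect to every seminorm
converges seminorm-wise).  All topological notions (closures, continuity of
maps, ...) are expressed directly through the seminorms.  The canonical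
C*-algebra `A_λ = A / ker p_λ` is dealt with through the seminorm `p_λ`
itself or, where the quotient is genuinely needed, through abstract
"quotient presentation" data (`QuotPres`).  Universal objects (Katsura
algebras of C*-correspondences, the pro-C*-algebra `𝒪_X`, crossed products)
are encoded through their universal properties.
-/

noncomputable section

/-- A pro-C*-algebra structure on a star `ℂ`-algebra `A`: a family of
C*-seminorms indexed by a preordered set `Λ`, monotone in the index,
separating (Hausdorff) and (seminorm-wise) complete. -/
structure ProCStar (Λ : Type) [Preorder Λ] (A : Type)
    [Ring A] [StarRing A] [Algebra ℂ A] where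
  p : Λ → Seminorm ℂ A
  p_mul : ∀ (l : Λ) (a b : A), p l (a * b) ≤ p l a * p l b
  p_star : ∀ (l : Λ) (a : A), p l (star a) = p l a
  p_cstar : ∀ (l : Λ) (a : A), p l (star a * a) = p l a * p l a
  p_mono : ∀ {l m : Λ}, l ≤ m → ∀ a : A, p l a ≤ p m a
  separating : ∀ a : A, (∀ l, p l a = 0) → a = 0
  complete : ∀ F : Filter A, F.NeBot →
    (∀ (l : Λ) (ε : ℝ), 0 < ε → ∃ s ∈ F, ∀ x ∈ s, ∀ y ∈ s, p l (x - y) < ε) →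
    ∃ a : A, ∀ (l : Λ) (ε : ℝ), 0 < ε → ∃ s ∈ F, ∀ x ∈ s, p l (x - a) < ε

/-- Closure of a subset with respect to a family of seminorms. -/
def semiClosure {Λ E : Type} [AddCommGroup E] [Module ℂ E]
    (q : Λ → Seminorm ℂ E) (s : Set E) : Set E :=
  {x | ∀ (l : Λ) (ε : ℝ), 0 < ε → ∃ y ∈ s, q l (x - y) < ε}

/-- A closed two-sided star ideal of a pro-C*-algebra. -/
structure IsProClosedIdeal {Λ : Type} [Preorder Λ] {A : Type}
    [Ring A] [StarRing A] [Algebra ℂ A] (S : ProCStar Λ A) (I : Set A) : Prop where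
  zero_mem : (0 : A) ∈ I
  add_mem : ∀ {a b : A}, a ∈ I → b ∈ I → a + b ∈ I
  smul_mem : ∀ (c : ℂ) {a : A}, a ∈ I → c • a ∈ I
  mul_mem_left : ∀ (b : A) {a : A}, a ∈ I → b * a ∈ I
  mul_mem_right : ∀ (b : A) {a : A}, a ∈ I → a * b ∈ I
  star_mem : ∀ {a : A}, a ∈ I → star a ∈ I
  closed : semiClosure S.p I ⊆ I

/-- The kernel of the seminorm `p_λ`, i.e. the kernel of `π_λ^A : A → A_λ`. -/
def kerSeminorm {Λ : Type} [Preorder Λ] {A : Type} [Ring A] [StarRing A] [Algebra ℂ A]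
    (S : ProCStar Λ A) (l : Λ) : Set A :=
  {a : A | S.p l a = 0}

/-- A continuous star-algebra morphism between pro-C*-algebras
(continuity is expressed by domination of seminorms, which for star morphisms
between pro-C*-algebras is equivalent to topological continuity). -/
def IsProCStarHom {Λ₁ Λ₂ A₁ A₂ : Type} [Preorder Λ₁] [Preorder Λ₂]
    [Ring A₁] [StarRing A₁] [Algebra ℂ A₁] [Ring A₂] [StarRing A₂] [Algebra ℂ A₂]
    (S₁ : ProCStar Λ₁ A₁) (S₂ : ProCStar Λ₂ A₂) (f : A₁ → A₂) : Prop :=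
  (∀ a b, f (a + b) = f a + f b) ∧ (∀ (c : ℂ) (a : A₁), f (c • a) = c • f a) ∧
    (∀ a b, f (a * b) = f a * f b) ∧ (∀ a, f (star a) = star (f a)) ∧
    ∀ l₂ : Λ₂, ∃ l₁ : Λ₁, ∀ a, S₂.p l₂ (f a) ≤ S₁.p l₁ a

/-- An isomorphism of pro-C*-algebras. -/
def IsProCStarIso {Λ₁ Λ₂ A₁ A₂ : Type} [Preorder Λ₁] [Preorder Λ₂]
    [Ring A₁] [StarRing A₁] [Algebra ℂ A₁] [Ring A₂] [StarRing A₂] [Algebra ℂ A₂]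
    (S₁ : ProCStar Λ₁ A₁) (S₂ : ProCStar Λ₂ A₂) (f : A₁ → A₂) : Prop :=
  IsProCStarHom S₁ S₂ f ∧ ∃ g : A₂ → A₁, IsProCStarHom S₂ S₁ g ∧
    Function.LeftInverse g f ∧ Function.RightInverse g f

/-- A (right) Hilbert pro-C*-module over the pro-C*-algebra `(A, S)`:
a right `A`-module with an `A`-valued inner product, complete with respect
to the induced family of seminorms `q l x = (p l ⟨x,x⟩)^{1/2}`
(the seminorms are part of the data, linked to the inner product by `q_sq`). -/
structure HilbertMod {Λ : Type} [Preorder Λ] {A : Type} [Ring A] [StarRing A] [Algebra ℂ A]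
    (S : ProCStar Λ A) (X : Type) [AddCommGroup X] [Module ℂ X] where
  smul : X → A → X
  add_smul' : ∀ (x y : X) (a : A), smul (x + y) a = smul x a + smul y a
  smul_add' : ∀ (x : X) (a b : A), smul x (a + b) = smul x a + smul x b
  smul_mul' : ∀ (x : X) (a b : A), smul x (a * b) = smul (smul x a) b
  csmul_smul' : ∀ (c : ℂ) (x : X) (a : A), smul (c • x) a = c • smul x a
  smul_csmul' : ∀ (c : ℂ) (x : X) (a : A), smul x (c • a) = c • smul x a
  inner : X → X → A
  inner_add_right : ∀ x y z : X, inner x (y + z) = inner x y + inner x z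
  inner_smul_right : ∀ (x y : X) (a : A), inner x (smul y a) = inner x y * a
  inner_csmul_right : ∀ (c : ℂ) (x y : X), inner x (c • y) = c • inner x y
  inner_star : ∀ x y : X, star (inner x y) = inner y x
  inner_self_pos : ∀ x : X, ∃ b : A, inner x x = star b * b
  inner_self_eq_zero : ∀ x : X, inner x x = 0 → x = 0
  q : Λ → Seminorm ℂ X
  q_sq : ∀ (l : Λ) (x : X), q l x * q l x = S.p l (inner x x)
  complete : ∀ F : Filter X, F.NeBot →
    (∀ (l : Λ) (ε : ℝ), 0 < ε → ∃ s ∈ F, ∀ x ∈ s, ∀ y ∈ s, q l (x - y) < ε) →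
    ∃ x₀ : X, ∀ (l : Λ) (ε : ℝ), 0 < ε → ∃ s ∈ F, ∀ x ∈ s, q l (x - x₀) < ε

section Operators

variable {Λ : Type} [Preorder Λ] {A : Type} [Ring A] [StarRing A] [Algebra ℂ A]
  {S : ProCStar Λ A} {X : Type} [AddCommGroup X] [Module ℂ X]

/-- The operator seminorm `p_{λ, L_A(X)}(T) = sup { q_λ(Tx) : q_λ(x) ≤ 1 }`. -/
def opSemi (M : HilbertMod S X) (l : Λ) (T : X → X) : ℝ :=
  sSup ((fun x => M.q l (T x)) '' {x : X | M.q l x ≤ 1})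

/-- `Tst` is an adjoint of `T`. -/
def AdjointPairOn (M : HilbertMod S X) (T Tst : X → X) : Prop :=
  ∀ x y : X, M.inner (T x) y = M.inner x (Tst y)

/-- Membership in `L_A(X)`: an adjointable module morphism. -/
def IsAdjointableOn (M : HilbertMod S X) (T : X → X) : Prop :=
  (∀ x y : X, T (x + y) = T x + T y) ∧ (∀ (c : ℂ) (x : X), T (c • x) = c • T x) ∧
    (∀ (x : X) (a : A), T (M.smul x a) = M.smul (T x) a) ∧
    ∃ Tst : X → X, AdjointPairOn M T Tst

/-- The "rank one" operator `θ_{y,x}(z) = y⟨x,z⟩_A`. -/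
def thetaOp (M : HilbertMod S X) (y x : X) : X → X :=
  fun z => M.smul y (M.inner x z)

/-- `Θ(X)`, the linear span of the operators `θ_{y,x}`. -/
def thetaSpan (M : HilbertMod S X) : Submodule ℂ (X → X) :=
  Submodule.span ℂ {T : X → X | ∃ y x : X, T = thetaOp M y x}

/-- `π_λ^{L_A(X)}(T) ∈ K_{A_λ}(X_λ)`, expressed through the seminorm `p_{λ,L_A(X)}`:
`T` is approximable by elements of `Θ(X)` modulo the kernel of `p_{λ,L_A(X)}`. -/
def memKlevel (M : HilbertMod S X) (l : Λ) (T : X → X) : Prop :=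
  ∀ ε : ℝ, 0 < ε → ∃ k ∈ thetaSpan M, opSemi M l (T - k) < ε

/-- Membership in `K_A(X)`, the closure of `Θ(X)` in `L_A(X)`. -/
def memK (M : HilbertMod S X) (T : X → X) : Prop :=
  IsAdjointableOn M T ∧ ∀ l : Λ, memKlevel M l T

/-- `XI = span { x a : x ∈ X, a ∈ I }`. -/
def smulSet (M : HilbertMod S X) (I : Set A) : Submodule ℂ X :=
  Submodule.span ℂ {z : X | ∃ x : X, ∃ a ∈ I, z = M.smul x a}

end Operators

/-- A pro-C*-correspondence `(X, A, φ_X)`: a Hilbert pro-C*-module `X` over `A`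
together with a continuous star morphism `φ_X : A → L_A(X)`. -/
structure Corr {Λ : Type} [Preorder Λ] {A : Type} [Ring A] [StarRing A] [Algebra ℂ A]
    (S : ProCStar Λ A) {X : Type} [AddCommGroup X] [Module ℂ X] (M : HilbertMod S X) where
  phi : A → X → X
  phi_add : ∀ a b : A, phi (a + b) = phi a + phi b
  phi_csmul : ∀ (c : ℂ) (a : A), phi (c • a) = c • phi a
  phi_mul : ∀ (a b : A) (x : X), phi (a * b) x = phi a (phi b x)
  phi_adj : ∀ a : A, IsAdjointableOn M (phi a)
  phi_star : ∀ a : A, AdjointPairOn M (phi a) (phi (star a))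
  phi_cont : ∀ l : Λ, ∃ m : Λ, ∀ a : A, opSemi M l (phi a) ≤ S.p m a

section CorrDefs

variable {Λ : Type} [Preorder Λ] {A : Type} [Ring A] [StarRing A] [Algebra ℂ A]
  {S : ProCStar Λ A} {X : Type} [AddCommGroup X] [Module ℂ X] {M : HilbertMod S X}

/-- `X(I)`, the closed span of `{ ⟨y, φ_X(a) x⟩_A : a ∈ I, x, y ∈ X }`. -/
def XofIdeal (C : Corr S M) (I : Set A) : Set A :=
  semiClosure S.p
    ↑(Submodule.span ℂ {c : A | ∃ a ∈ I, ∃ x y : X, c = M.inner y (C.phi a x)})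

/-- `X⁻¹(I) = { a ∈ A : ⟨y, φ_X(a) x⟩_A ∈ I for all x, y ∈ X }`. -/
def XinvIdeal (C : Corr S M) (I : Set A) : Set A :=
  {a : A | ∀ x y : X, M.inner y (C.phi a x) ∈ I}

/-- The ideal `J_X^λ = { a : π_λ^{L_A(X)}(φ_X(a)) ∈ K_{A_λ}(X_λ) and
π_λ^A(ab) = 0 for every b ∈ ker (π_λ^{L_A(X)} ∘ φ_X) }`, all conditions being
expressed through the seminorms `p_λ` and `p_{λ,L_A(X)}`. -/
def Jlevel (C : Corr S M) (l : Λ) : Set A :=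
  {a : A | memKlevel M l (C.phi a) ∧
    ∀ b : A, opSemi M l (C.phi b) = 0 → S.p l (a * b) = 0}

/-- The ideal `𝒥_X = ⋂_λ J_X^λ`. -/
def JX (C : Corr S M) : Set A :=
  ⋂ l : Λ, Jlevel C l

/-- Katsura's ideal `J_X = φ_X⁻¹(K_A(X)) ∩ (ker φ_X)^⊥` of a C*-correspondence
(to be used when the index set is a singleton, i.e. for C*-algebras). -/
def KatsuraIdeal (C : Corr S M) : Set A :=
  {a : A | memK M (C.phi a) ∧ ∀ b : A, C.phi b = 0 → a * b = 0}

/-- `(X, A, φ_X)` is an inverse limit pro-C*-correspondence: `φ_X` is compatible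
with the Arens–Michael decompositions, i.e. `φ_X(ker p_λ) ⊆ ker π_λ^{L_A(X)}`
for every `λ`, so that `φ_X = lim_λ φ_{X_λ}`. -/
def IsInvLimCorr (C : Corr S M) : Prop :=
  ∀ (l : Λ) (a : A), S.p l a = 0 → opSemi M l (C.phi a) = 0

/-- An ideal `I` is positively invariant if `X(I) ⊆ I`. -/
def PosInvariant (C : Corr S M) (I : Set A) : Prop :=
  XofIdeal C I ⊆ I

/-- An ideal `I` is negatively invariant if
`π_μ^A(J_X^λ) ∩ π_μ^A(X⁻¹(I)) ⊆ π_μ^A(I)` for all `λ ≥ μ`: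
whenever `a ∈ J_X^λ` and `a' ∈ X⁻¹(I)` have the same image in `A_μ`, this
common image lies in `π_μ^A(I)`. -/
def NegInvariant (C : Corr S M) (I : Set A) : Prop :=
  ∀ (l m : Λ), m ≤ l → ∀ a ∈ Jlevel C l, ∀ a' ∈ XinvIdeal C I,
    S.p m (a - a') = 0 → ∃ i ∈ I, S.p m (a - i) = 0

/-- An invariant ideal: both positively and negatively invariant. -/
def InvariantIdeal (C : Corr S M) (I : Set A) : Prop :=
  PosInvariant C I ∧ NegInvariant C I

end CorrDefs

/-- A morphism `(Π, T)` between pro-C*-correspondences. -/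
structure CorrMor {Λ : Type} [Preorder Λ] {A : Type} [Ring A] [StarRing A] [Algebra ℂ A]
    {S : ProCStar Λ A} {X : Type} [AddCommGroup X] [Module ℂ X] {M : HilbertMod S X}
    (C : Corr S M)
    {Δ : Type} [Preorder Δ] {B : Type} [Ring B] [StarRing B] [Algebra ℂ B]
    {SB : ProCStar Δ B} {Y : Type} [AddCommGroup Y] [Module ℂ Y] {N : HilbertMod SB Y}
    (D : Corr SB N) where
  Pi : A → B
  Pi_add : ∀ a b : A, Pi (a + b) = Pi a + Pi b
  Pi_csmul : ∀ (c : ℂ) (a : A), Pi (c • a) = c • Pi a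
  Pi_mul : ∀ a b : A, Pi (a * b) = Pi a * Pi b
  Pi_star : ∀ a : A, Pi (star a) = star (Pi a)
  Pi_cont : ∀ d : Δ, ∃ l : Λ, ∀ a : A, SB.p d (Pi a) ≤ S.p l a
  T : X → Y
  T_inner : ∀ x₁ x₂ : X, N.inner (T x₁) (T x₂) = Pi (M.inner x₁ x₂)
  T_phi : ∀ (a : A) (x : X), D.phi (Pi a) (T x) = T (C.phi a x)

/-- A representation `(π, t)` of a pro-C*-correspondence `(X, A, φ_X)`
on a pro-C*-algebra `B`, i.e. a morphism into the identity correspondence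
`(B, B, id_B)`. -/
structure CorrRep {Λ : Type} [Preorder Λ] {A : Type} [Ring A] [StarRing A] [Algebra ℂ A]
    {S : ProCStar Λ A} {X : Type} [AddCommGroup X] [Module ℂ X] {M : HilbertMod S X}
    (C : Corr S M)
    {ΛB : Type} [Preorder ΛB] {B : Type} [Ring B] [StarRing B] [Algebra ℂ B]
    (SB : ProCStar ΛB B) where
  pi : A → B
  pi_add : ∀ a b : A, pi (a + b) = pi a + pi b
  pi_csmul : ∀ (c : ℂ) (a : A), pi (c • a) = c • pi a
  pi_mul : ∀ a b : A, pi (a * b) = pi a * pi b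
  pi_star : ∀ a : A, pi (star a) = star (pi a)
  pi_cont : ∀ d : ΛB, ∃ l : Λ, ∀ a : A, SB.p d (pi a) ≤ S.p l a
  t : X → B
  t_add : ∀ x y : X, t (x + y) = t x + t y
  t_csmul : ∀ (c : ℂ) (x : X), t (c • x) = c • t x
  t_inner : ∀ x y : X, star (t x) * t y = pi (M.inner x y)
  t_phi : ∀ (a : A) (x : X), t (C.phi a x) = pi a * t x

/-- Covariance of a representation `(π, t)`: `ψ_t(φ_X(a)) = π(a)` for every
`a ∈ 𝒥_X`, expressed through simultaneous approximation: there is a net of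
finite "rank one" sums `∑ θ_{y_i, x_i}` converging to `φ_X(a)` in `L_A(X)`
whose images `∑ t(y_i) t(x_i)*` converge to `π(a)` in `B`. -/
def IsCovariantRep {Λ : Type} [Preorder Λ] {A : Type} [Ring A] [StarRing A] [Algebra ℂ A]
    {S : ProCStar Λ A} {X : Type} [AddCommGroup X] [Module ℂ X] {M : HilbertMod S X}
    {C : Corr S M}
    {ΛB : Type} [Preorder ΛB] {B : Type} [Ring B] [StarRing B] [Algebra ℂ B]
    {SB : ProCStar ΛB B} (R : CorrRep C SB) : Prop :=
  ∀ a ∈ JX C, ∃ (ι : Type) (F : Filter ι), F.NeBot ∧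
    ∃ (n : ι → ℕ) (xs ys : (j : ι) → Fin (n j) → X),
      (∀ l : Λ, Filter.Tendsto
        (fun j => opSemi M l (C.phi a - ∑ i, thetaOp M (ys j i) (xs j i))) F (nhds 0)) ∧
      (∀ d : ΛB, Filter.Tendsto
        (fun j => SB.p d (R.pi a - ∑ i, R.t (ys j i) * star (R.t (xs j i)))) F (nhds 0))

/-- The pro-C*-algebra `𝒪_X` associated to a pro-C*-correspondence, presented
by a universal covariant representation `(π_X, t_X)` whose images generate it. -/
structure UniversalCovRep {Λ : Type} [Preorder Λ] {A : Type} [Ring A] [StarRing A] [Algebra ℂ A]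
    {S : ProCStar Λ A} {X : Type} [AddCommGroup X] [Module ℂ X] {M : HilbertMod S X}
    (C : Corr S M)
    {ΛO : Type} [Preorder ΛO] {O : Type} [Ring O] [StarRing O] [Algebra ℂ O] [StarModule ℂ O]
    (SO : ProCStar ΛO O) where
  rep : CorrRep C SO
  covariant : IsCovariantRep rep
  generates : ∀ o : O, o ∈ semiClosure SO.p
    ↑(NonUnitalStarAlgebra.adjoin ℂ (Set.range rep.pi ∪ Set.range rep.t))
  universal : ∀ {ΛB : Type} [Preorder ΛB] {B : Type} [Ring B] [StarRing B] [Algebra ℂ B]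
    (SB : ProCStar ΛB B) (R : CorrRep C SB), IsCovariantRep R →
    ∃! Φ : O → B, IsProCStarHom SO SB Φ ∧
      (∀ a, Φ (rep.pi a) = R.pi a) ∧ (∀ x, Φ (rep.t x) = R.t x)

/-- A presentation of the quotient C*-correspondence
`(X_λ, A_λ, φ_{X_λ})` of `(X, A, φ_X)` at level `λ`: a C*-algebra `(B, SB)`
(a pro-C*-algebra over a singleton index set) which is a quotient of `A` by
`ker p_λ`, a Hilbert C*-module `N` over it which is a quotient of `X` by
`ker p_λ^A`, and the induced correspondence `D`. -/
structure QuotPres {Λ : Type} [Preorder Λ] {A : Type} [Ring A] [StarRing A] [Algebra ℂ A]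
    {S : ProCStar Λ A} {X : Type} [AddCommGroup X] [Module ℂ X] {M : HilbertMod S X}
    (C : Corr S M) (l : Λ)
    {B : Type} [Ring B] [StarRing B] [Algebra ℂ B] (SB : ProCStar PUnit B)
    {Y : Type} [AddCommGroup Y] [Module ℂ Y] (N : HilbertMod SB Y) (D : Corr SB N)
    (piq : A → B) (sig : X → Y) : Prop where
  piq_add : ∀ a b : A, piq (a + b) = piq a + piq b
  piq_csmul : ∀ (c : ℂ) (a : A), piq (c • a) = c • piq a
  piq_mul : ∀ a b : A, piq (a * b) = piq a * piq b
  piq_star : ∀ a : A, piq (star a) = star (piq a)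
  piq_surj : Function.Surjective piq
  piq_norm : ∀ a : A, SB.p PUnit.unit (piq a) = S.p l a
  sig_add : ∀ x y : X, sig (x + y) = sig x + sig y
  sig_csmul : ∀ (c : ℂ) (x : X), sig (c • x) = c • sig x
  sig_surj : Function.Surjective sig
  sig_smul : ∀ (x : X) (a : A), sig (M.smul x a) = N.smul (sig x) (piq a)
  sig_inner : ∀ x y : X, N.inner (sig x) (sig y) = piq (M.inner x y)
  phi_comm : ∀ (a : A) (x : X), D.phi (piq a) (sig x) = sig (C.phi a x)

/-- Katsura's C*-algebra `𝒪_{X_ω}` associated to a `𝒯`-pair `ω = ({0}, I')` of a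
C*-correspondence, presented through a representation `(π_ω, t_ω)` whose
associated `𝒯`-pair is `ω`, whose images generate the algebra, and which is
universal among representations `(π, t)` with `ω ⊆ ω_{(π,t)}` (Katsura's
Theorem 7.1). -/
structure TPairAlg {B : Type} [Ring B] [StarRing B] [Algebra ℂ B] {SB : ProCStar PUnit B}
    {Y : Type} [AddCommGroup Y] [Module ℂ Y] {N : HilbertMod SB Y} (D : Corr SB N)
    (I' : Set B)
    {O : Type} [Ring O] [StarRing O] [Algebra ℂ O] [StarModule ℂ O]
    (SO : ProCStar PUnit O) where
  rep : CorrRep D SO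
  ker_pi : ∀ b : B, rep.pi b = 0 → b = 0
  tpair_snd : ∀ b : B, b ∈ I' ↔ rep.pi b ∈ semiClosure SO.p
    ↑(Submodule.span ℂ {z : O | ∃ x y : Y, z = rep.t x * star (rep.t y)})
  generates : ∀ o : O, o ∈ semiClosure SO.p
    ↑(NonUnitalStarAlgebra.adjoin ℂ (Set.range rep.pi ∪ Set.range rep.t))
  universal : ∀ {ΛB : Type} [Preorder ΛB] {B' : Type} [Ring B'] [StarRing B'] [Algebra ℂ B']
    (SB' : ProCStar ΛB B') (R : CorrRep D SB'),
    (∀ b ∈ I', R.pi b ∈ semiClosure SB'.p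
      ↑(Submodule.span ℂ {z : B' | ∃ x y : Y, z = R.t x * star (R.t y)})) →
    ∃! Φ : O → B', IsProCStarHom SO SB' Φ ∧
      (∀ b, Φ (rep.pi b) = R.pi b) ∧ (∀ x, Φ (rep.t x) = R.t x)

/-- A Hilbert `A`–`A` pro-C*-bimodule: a right Hilbert pro-C*-module which is
also a left Hilbert pro-C*-module, with `_A⟨x,y⟩ z = x ⟨y,z⟩_A` and the
compatibility of the respective families of seminorms. -/
structure HilbertBimod {Λ : Type} [Preorder Λ] {A : Type} [Ring A] [StarRing A] [Algebra ℂ A]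
    (S : ProCStar Λ A) (X : Type) [AddCommGroup X] [Module ℂ X]
    extends HilbertMod S X where
  lsmul : A → X → X
  lsmul_add' : ∀ (a : A) (x y : X), lsmul a (x + y) = lsmul a x + lsmul a y
  add_lsmul' : ∀ (a b : A) (x : X), lsmul (a + b) x = lsmul a x + lsmul b x
  lsmul_mul' : ∀ (a b : A) (x : X), lsmul (a * b) x = lsmul a (lsmul b x)
  lsmul_csmul' : ∀ (c : ℂ) (a : A) (x : X), lsmul a (c • x) = c • lsmul a x
  csmul_lsmul' : ∀ (c : ℂ) (a : A) (x : X), lsmul (c • a) x = c • lsmul a x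
  lsmul_smul' : ∀ (a : A) (x : X) (b : A), lsmul a (smul x b) = smul (lsmul a x) b
  linner : X → X → A
  linner_add_left : ∀ x y z : X, linner (x + z) y = linner x y + linner z y
  linner_lsmul_left : ∀ (a : A) (x y : X), linner (lsmul a x) y = a * linner x y
  linner_csmul_left : ∀ (c : ℂ) (x y : X), linner (c • x) y = c • linner x y
  linner_star : ∀ x y : X, star (linner x y) = linner y x
  linner_self_pos : ∀ x : X, ∃ b : A, linner x x = star b * b
  linner_self_eq_zero : ∀ x : X, linner x x = 0 → x = 0
  bimodule_rel : ∀ x y z : X, lsmul (linner x y) z = smul x (inner y z)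
  lq : Λ → Seminorm ℂ X
  lq_sq : ∀ (l : Λ) (x : X), lq l x * lq l x = S.p l (linner x x)
  q_lsmul : ∀ (l : Λ) (a : A) (x : X), q l (lsmul a x) ≤ S.p l a * q l x
  lq_smul : ∀ (l : Λ) (x : X) (a : A), lq l (smul x a) ≤ S.p l a * lq l x

/-- The closed ideal `_AI`, the closed span of `{ _A⟨x,y⟩ : x, y ∈ X }`. -/
def leftIdealSet {Λ : Type} [Preorder Λ] {A : Type} [Ring A] [StarRing A] [Algebra ℂ A]
    {S : ProCStar Λ A} {X : Type} [AddCommGroup X] [Module ℂ X]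
    (W : HilbertBimod S X) : Set A :=
  semiClosure S.p ↑(Submodule.span ℂ {a : A | ∃ x y : X, a = W.linner x y})

/-- A covariant representation `(φ_X, φ_A)` of a Hilbert `A`–`A`
pro-C*-bimodule on a pro-C*-algebra `B` (Joiţa–Zarakas, Definition 3.1). -/
structure BimodCovRep {Λ : Type} [Preorder Λ] {A : Type} [Ring A] [StarRing A] [Algebra ℂ A]
    {S : ProCStar Λ A} {X : Type} [AddCommGroup X] [Module ℂ X] (W : HilbertBimod S X)
    {ΛB : Type} [Preorder ΛB] {B : Type} [Ring B] [StarRing B] [Algebra ℂ B]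
    (SB : ProCStar ΛB B) where
  phiA : A → B
  phiA_add : ∀ a b : A, phiA (a + b) = phiA a + phiA b
  phiA_csmul : ∀ (c : ℂ) (a : A), phiA (c • a) = c • phiA a
  phiA_mul : ∀ a b : A, phiA (a * b) = phiA a * phiA b
  phiA_star : ∀ a : A, phiA (star a) = star (phiA a)
  phiA_cont : ∀ d : ΛB, ∃ l : Λ, ∀ a : A, SB.p d (phiA a) ≤ S.p l a
  phiX : X → B
  cov_smul : ∀ (x : X) (a : A), phiX (W.smul x a) = phiX x * phiA a
  cov_lsmul : ∀ (a : A) (x : X), phiX (W.lsmul a x) = phiA a * phiX x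
  cov_inner : ∀ x y : X, star (phiX x) * phiX y = phiA (W.inner x y)
  cov_linner : ∀ x y : X, phiX x * star (phiX y) = phiA (W.linner x y)

/-- The crossed product `A ×_X ℤ` of `A` by a Hilbert `A`–`A` pro-C*-bimodule
`X` (Joiţa–Zarakas, Definition 3.3): a pro-C*-algebra with a covariant
representation `(i_X, i_A)` through which every covariant representation
factors uniquely. -/
structure CrossedProdBimod {Λ : Type} [Preorder Λ] {A : Type} [Ring A] [StarRing A] [Algebra ℂ A]
    {S : ProCStar Λ A} {X : Type} [AddCommGroup X] [Module ℂ X] (W : HilbertBimod S X)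
    {ΛO : Type} [Preorder ΛO] {O : Type} [Ring O] [StarRing O] [Algebra ℂ O]
    (SO : ProCStar ΛO O) where
  iRep : BimodCovRep W SO
  universal : ∀ {ΛB : Type} [Preorder ΛB] {B : Type} [Ring B] [StarRing B] [Algebra ℂ B]
    (SB : ProCStar ΛB B) (R : BimodCovRep W SB),
    ∃! Φ : O → B, IsProCStarHom SO SB Φ ∧
      (∀ x, Φ (iRep.phiX x) = R.phiX x) ∧ (∀ a, Φ (iRep.phiA a) = R.phiA a)

/-- A nondegenerate covariant representation `(u, φ)` of the pro-C*-dynamical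
system `(A, α, ℤ)` (with action `n ↦ αⁿ = αz n`) on a pro-C*-algebra `B`. -/
structure DynCovRep {Λ : Type} [Preorder Λ] {A : Type} [Ring A] [StarRing A] [Algebra ℂ A]
    (S : ProCStar Λ A) (αz : ℤ → A → A)
    {ΛB : Type} [Preorder ΛB] {B : Type} [Ring B] [StarRing B] [Algebra ℂ B]
    (SB : ProCStar ΛB B) where
  phi : A → B
  phi_add : ∀ a b : A, phi (a + b) = phi a + phi b
  phi_csmul : ∀ (c : ℂ) (a : A), phi (c • a) = c • phi a
  phi_mul : ∀ a b : A, phi (a * b) = phi a * phi b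
  phi_star : ∀ a : A, phi (star a) = star (phi a)
  phi_cont : ∀ d : ΛB, ∃ l : Λ, ∀ a : A, SB.p d (phi a) ≤ S.p l a
  u : ℤ → B
  u_zero : u 0 = 1
  u_add : ∀ m n : ℤ, u (m + n) = u m * u n
  u_star : ∀ n : ℤ, star (u n) = u (-n)
  cov : ∀ (n : ℤ) (a : A), u n * phi a = phi (αz n a) * u n
  nondeg : ∀ b : B, b ∈ semiClosure SB.p
    ↑(Submodule.span ℂ {z : B | ∃ (a : A) (b' : B), z = phi a * b'})

/-- The crossed product `A ×_α ℤ`: the universal pro-C*-algebra with respect to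
nondegenerate covariant representations of `(A, α, ℤ)`. -/
structure CrossedProdDyn {Λ : Type} [Preorder Λ] {A : Type} [Ring A] [StarRing A] [Algebra ℂ A]
    (S : ProCStar Λ A) (αz : ℤ → A → A)
    {ΛO : Type} [Preorder ΛO] {O : Type} [Ring O] [StarRing O] [Algebra ℂ O]
    (SO : ProCStar ΛO O) where
  iRep : DynCovRep S αz SO
  universal : ∀ {ΛB : Type} [Preorder ΛB] {B : Type} [Ring B] [StarRing B] [Algebra ℂ B]
    (SB : ProCStar ΛB B) (R : DynCovRep S αz SB),
    ∃! Φ : O → B, IsProCStarHom SO SB Φ ∧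
      (∀ a, Φ (iRep.phi a) = R.phi a) ∧ (∀ n, Φ (iRep.u n) = R.u n)

end


/-! ### Auxiliary machinery for Statement 14 -/

noncomputable section Stmt14Aux

private lemma sq_le_of_sq_le' {a b : ℝ} (hb : 0 ≤ b) (h : a * a ≤ b * b) : a ≤ b := by nlinarith

private lemma eq_zero_of_le_eta {c K : ℝ} (hc : 0 ≤ c) (h : ∀ η : ℝ, 0 < η → c ≤ η * K) : c = 0 := by
  rcases le_or_gt K 0 with hK | hK
  · have h1 := h 1 one_pos
    nlinarith
  · by_contra hne
    have hcpos : 0 < c := lt_of_le_of_ne hc (Ne.symm hne)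
    have h2 := h (c / (2 * K)) (by positivity)
    rw [div_mul_eq_mul_div] at h2
    rw [le_div_iff₀ (by positivity)] at h2
    nlinarith

private lemma eq_zero_of_mul_le {t α : ℝ} (ht : 0 ≤ t) (hα : 0 ≤ α)
    (h : ∀ r : ℝ, 0 < r → r * t ≤ α) : t = 0 := by
  by_contra hne
  have htpos : 0 < t := lt_of_le_of_ne ht (Ne.symm hne)
  have h2 := h ((α + 1) / t) (by positivity)
  rw [div_mul_cancel₀ _ (ne_of_gt htpos)] at h2
  linarith

private lemma pow_limit_le {P Q R : ℝ} (hP : 0 ≤ P) (hQ : 0 ≤ Q)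
    (h : ∀ k : ℕ, P ^ (2 ^ k) ≤ Q ^ (2 ^ k) * R) : P ≤ Q := by
  by_contra hlt
  push_neg at hlt
  have hPpos : 0 < P := lt_of_le_of_lt hQ hlt
  rcases eq_or_lt_of_le hQ with hQ0 | hQpos
  · have h0 := h 0
    simp only [pow_zero, pow_one] at h0
    rw [← hQ0] at h0
    simp at h0
    linarith
  · set r : ℝ := P / Q with hr
    have hr1 : 1 < r := (one_lt_div hQpos).mpr hlt
    have hrk : ∀ k : ℕ, r ^ (2 ^ k) ≤ R := by
      intro k
      rw [hr, div_pow, div_le_iff₀ (by positivity)]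
      calc P ^ 2 ^ k ≤ Q ^ 2 ^ k * R := h k
        _ = R * Q ^ 2 ^ k := by ring
    obtain ⟨n, hn⟩ := pow_unbounded_of_one_lt R hr1
    have h1 : r ^ n ≤ r ^ (2 ^ n) :=
      pow_le_pow_right₀ (le_of_lt hr1) (le_of_lt (n.lt_two_pow_self))
    exact absurd (lt_of_lt_of_le hn (le_trans h1 (hrk n))) (lt_irrefl _)

namespace Stmt14

variable {Λ : Type} [Preorder Λ] {A : Type} [Ring A] [StarRing A] [Algebra ℂ A]
  {S : ProCStar Λ A} {X : Type} [AddCommGroup X] [Module ℂ X]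

/-- The generating set of the ideal `_AI`. -/
def LSet (W : HilbertBimod S X) : Set A := {a : A | ∃ x y : X, a = W.linner x y}

variable (W : HilbertBimod S X)

lemma lsmul_zero (a : A) : W.lsmul a 0 = 0 := by
  have h := W.lsmul_add' a 0 0
  rw [add_zero] at h
  exact (left_eq_add.mp h)

lemma zero_lsmul (x : X) : W.lsmul 0 x = 0 := by
  have h := W.csmul_lsmul' 0 0 x
  rw [zero_smul, zero_smul] at h
  exact h

lemma lsmul_sub (a b : A) (x : X) :
    W.lsmul (a - b) x = W.lsmul a x - W.lsmul b x := by
  have e : a - b + b = a := by abel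
  have h := W.add_lsmul' (a - b) b x
  rw [e] at h
  rw [h]; abel

lemma inner_add_left (x y z : X) : W.inner (x + y) z = W.inner x z + W.inner y z := by
  have h : star (W.inner z (x + y)) = star (W.inner z x + W.inner z y) := by
    rw [W.inner_add_right]
  rw [W.inner_star, star_add, W.inner_star, W.inner_star] at h
  exact h

lemma linner_add_right (x y z : X) : W.linner x (y + z) = W.linner x y + W.linner x z := by
  have h : star (W.linner (y + z) x) = star (W.linner y x + W.linner z x) := by
    rw [W.linner_add_left]
  rw [W.linner_star, star_add, W.linner_star, W.linner_star] at h
  exact h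

lemma p_mul_star_self (l : Λ) (a : A) : S.p l (a * star a) = S.p l a * S.p l a := by
  have h := S.p_cstar l (star a)
  rw [star_star] at h
  rw [h, S.p_star]

lemma q_smul_le (l : Λ) (x : X) (a : A) : W.q l (W.smul x a) ≤ S.p l a * W.q l x := by
  have h0 : W.inner (W.smul x a) x = star a * W.inner x x := by
    rw [← W.inner_star x (W.smul x a), W.inner_smul_right, star_mul, W.inner_star]
  have h1 : W.inner (W.smul x a) (W.smul x a) = star a * W.inner x x * a := by
    rw [W.inner_smul_right, h0]
  have h3 : S.p l (star a * W.inner x x * a) ≤ (S.p l a * W.q l x) * (S.p l a * W.q l x) := by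
    have e1 := S.p_mul l (star a * W.inner x x) a
    have e2 := S.p_mul l (star a) (W.inner x x)
    have e3 : S.p l (star a) = S.p l a := S.p_star l a
    have e4 : S.p l (W.inner x x) = W.q l x * W.q l x := (W.q_sq l x).symm
    have n1 := apply_nonneg (S.p l) a
    calc S.p l (star a * W.inner x x * a) ≤ S.p l (star a * W.inner x x) * S.p l a := e1
      _ ≤ (S.p l (star a) * S.p l (W.inner x x)) * S.p l a := mul_le_mul_of_nonneg_right e2 n1
      _ = (S.p l a * W.q l x) * (S.p l a * W.q l x) := by rw [e3, e4]; ring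
  apply sq_le_of_sq_le' (mul_nonneg (apply_nonneg _ _) (apply_nonneg _ _))
  rw [W.q_sq, h1]
  exact h3

lemma lq_lsmul_le (l : Λ) (a : A) (x : X) : W.lq l (W.lsmul a x) ≤ S.p l a * W.lq l x := by
  have h0 : W.linner x (W.lsmul a x) = W.linner x x * star a := by
    rw [← W.linner_star (W.lsmul a x) x, W.linner_lsmul_left, star_mul, W.linner_star]
  have h1 : W.linner (W.lsmul a x) (W.lsmul a x) = a * (W.linner x x * star a) := by
    rw [W.linner_lsmul_left, h0]
  have h3 : S.p l (a * (W.linner x x * star a)) ≤ (S.p l a * W.lq l x) * (S.p l a * W.lq l x) := by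
    have e1 := S.p_mul l a (W.linner x x * star a)
    have e2 := S.p_mul l (W.linner x x) (star a)
    have e3 : S.p l (star a) = S.p l a := S.p_star l a
    have e4 : S.p l (W.linner x x) = W.lq l x * W.lq l x := (W.lq_sq l x).symm
    have n1 := apply_nonneg (S.p l) a
    calc S.p l (a * (W.linner x x * star a)) ≤ S.p l a * S.p l (W.linner x x * star a) := e1
      _ ≤ S.p l a * (S.p l (W.linner x x) * S.p l (star a)) := by
          have := mul_le_mul_of_nonneg_left e2 n1
          linarith
      _ = (S.p l a * W.lq l x) * (S.p l a * W.lq l x) := by rw [e3, e4]; ring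
  apply sq_le_of_sq_le' (mul_nonneg (apply_nonneg _ _) (apply_nonneg _ _))
  rw [W.lq_sq, h1]
  exact h3

lemma q_mono {l m : Λ} (h : m ≤ l) (x : X) : W.q m x ≤ W.q l x := by
  apply sq_le_of_sq_le' (apply_nonneg _ _)
  rw [W.q_sq, W.q_sq]
  exact S.p_mono h _

private lemma semi_sub_sub_le {E : Type} [AddCommGroup E] [Module ℂ E]
    (p : Seminorm ℂ E) (a b c : E) : p (a - b - c) ≤ p a + p b + p c := by
  have h1 : p (a - b - c) ≤ p (a - b) + p c := by
    simpa [sub_eq_add_neg, map_neg_eq_map] using map_add_le_add p (a - b) (-c)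
  have h2 : p (a - b) ≤ p a + p b := by
    simpa [sub_eq_add_neg, map_neg_eq_map] using map_add_le_add p a (-b)
  linarith

/-- Basic quadratic inequality for the right inner product (no Cauchy–Schwarz needed). -/
lemma base_r (l : Λ) (y z : X) :
    2 * (S.p l (W.inner y z) * S.p l (W.inner y z)) ≤
      (W.q l y + S.p l (W.inner y z) * W.q l z) * (W.q l y + S.p l (W.inner y z) * W.q l z) +
      W.q l y * W.q l y +
      (S.p l (W.inner y z) * W.q l z) * (S.p l (W.inner y z) * W.q l z) := by
  have h1 : W.inner y (W.smul z (star (W.inner y z))) = W.inner y z * star (W.inner y z) := by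
    rw [W.inner_smul_right]
  have h2 : W.inner (W.smul z (star (W.inner y z))) y = W.inner y z * star (W.inner y z) := by
    rw [← W.inner_star y (W.smul z (star (W.inner y z))), h1, star_mul, star_star]
  have h3 : W.inner (y + W.smul z (star (W.inner y z))) (y + W.smul z (star (W.inner y z))) =
      W.inner y y + W.inner y (W.smul z (star (W.inner y z))) +
      W.inner (W.smul z (star (W.inner y z))) y +
      W.inner (W.smul z (star (W.inner y z))) (W.smul z (star (W.inner y z))) := by
    rw [W.inner_add_right, inner_add_left, inner_add_left]
    abel
  have h4 : (2:ℂ) • (W.inner y z * star (W.inner y z)) =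
      W.inner (y + W.smul z (star (W.inner y z))) (y + W.smul z (star (W.inner y z)))
      - W.inner y y
      - W.inner (W.smul z (star (W.inner y z))) (W.smul z (star (W.inner y z))) := by
    rw [two_smul, h3, h1, h2]
    abel
  have h5 : S.p l (W.inner y z * star (W.inner y z)) = S.p l (W.inner y z) * S.p l (W.inner y z) :=
    p_mul_star_self l (W.inner y z)
  have h6 : W.q l (W.smul z (star (W.inner y z))) ≤ S.p l (W.inner y z) * W.q l z := by
    calc W.q l (W.smul z (star (W.inner y z))) ≤ S.p l (star (W.inner y z)) * W.q l z :=
          q_smul_le W l z (star (W.inner y z))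
      _ = S.p l (W.inner y z) * W.q l z := by rw [S.p_star]
  have h7 : 2 * S.p l (W.inner y z * star (W.inner y z)) ≤
      W.q l (y + W.smul z (star (W.inner y z))) * W.q l (y + W.smul z (star (W.inner y z)))
      + W.q l y * W.q l y
      + W.q l (W.smul z (star (W.inner y z))) * W.q l (W.smul z (star (W.inner y z))) := by
    have e1 : S.p l ((2:ℂ) • (W.inner y z * star (W.inner y z))) =
        2 * S.p l (W.inner y z * star (W.inner y z)) := by
      rw [map_smul_eq_mul]
      norm_num
    rw [← e1, h4]
    calc S.p l (_ - _ - _) ≤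
        S.p l (W.inner (y + W.smul z (star (W.inner y z))) (y + W.smul z (star (W.inner y z))))
        + S.p l (W.inner y y)
        + S.p l (W.inner (W.smul z (star (W.inner y z))) (W.smul z (star (W.inner y z)))) :=
          semi_sub_sub_le (S.p l) _ _ _
      _ = _ := by rw [← W.q_sq, ← W.q_sq, ← W.q_sq]
  have e2 : W.q l (y + W.smul z (star (W.inner y z))) ≤
      W.q l y + S.p l (W.inner y z) * W.q l z := by
    calc W.q l (y + W.smul z (star (W.inner y z))) ≤
        W.q l y + W.q l (W.smul z (star (W.inner y z))) := map_add_le_add _ _ _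
      _ ≤ W.q l y + S.p l (W.inner y z) * W.q l z := by linarith
  have n1 := apply_nonneg (W.q l) (y + W.smul z (star (W.inner y z)))
  have n2 := apply_nonneg (W.q l) (W.smul z (star (W.inner y z)))
  have n3 := apply_nonneg (W.q l) y
  have n4 := apply_nonneg (S.p l) (W.inner y z)
  have n5 := apply_nonneg (W.q l) z
  nlinarith [h7, e2, h6, h5, mul_self_nonneg (W.q l y + S.p l (W.inner y z) * W.q l z)]

lemma null_r (l : Λ) {z : X} (hz : W.q l z = 0) (y : X) : S.p l (W.inner y z) = 0 := by
  have key : ∀ z' : X, W.q l z' = 0 → S.p l (W.inner y z') ≤ W.q l y := by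
    intro z' hz'
    have h := base_r W l y z'
    rw [hz'] at h
    have n1 := apply_nonneg (S.p l) (W.inner y z')
    have n2 := apply_nonneg (W.q l) y
    nlinarith
  apply eq_zero_of_mul_le (apply_nonneg _ _) (apply_nonneg (W.q l) y)
  intro r hr
  have hz2 : W.q l (((r:ℝ):ℂ) • z) = 0 := by
    rw [map_smul_eq_mul, hz, mul_zero]
  have h2 := key _ hz2
  rw [W.inner_csmul_right, map_smul_eq_mul, Complex.norm_real, Real.norm_eq_abs,
    abs_of_pos hr] at h2
  exact h2

lemma null_r' (l : Λ) {z : X} (hz : W.q l z = 0) (y : X) : S.p l (W.inner z y) = 0 := by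
  have h := null_r W l hz y
  rw [← W.inner_star z y, S.p_star] at h
  exact h

lemma cs_r (l : Λ) (y z : X) : S.p l (W.inner y z) ≤ 4 * (W.q l y * W.q l z) := by
  rcases eq_or_lt_of_le (apply_nonneg (W.q l) z) with hz | hz
  · rw [null_r W l hz.symm y]
    have := apply_nonneg (W.q l) y
    nlinarith
  · have hcpos : 0 < 1 / (2 * W.q l z) := by positivity
    have hq : W.q l ((((1 / (2 * W.q l z)):ℝ):ℂ) • z) = 1/2 := by
      rw [map_smul_eq_mul, Complex.norm_real, Real.norm_eq_abs, abs_of_pos hcpos]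
      field_simp
    have h := base_r W l y ((((1 / (2 * W.q l z)):ℝ):ℂ) • z)
    rw [W.inner_csmul_right, map_smul_eq_mul, Complex.norm_real, Real.norm_eq_abs,
      abs_of_pos hcpos, hq] at h
    have n1 := apply_nonneg (W.q l) y
    have n2 := apply_nonneg (S.p l) (W.inner y z)
    have key : (1 / (2 * W.q l z)) * S.p l (W.inner y z) ≤ 2 * W.q l y := by
      nlinarith [mul_nonneg (le_of_lt hcpos) n2]
    rw [div_mul_eq_mul_div, one_mul, div_le_iff₀ (by positivity)] at key
    nlinarith

/-- Basic quadratic inequality for the left inner product. -/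
lemma base_l (l : Λ) (x y : X) :
    2 * (S.p l (W.linner x y) * S.p l (W.linner x y)) ≤
      (W.lq l y + S.p l (W.linner x y) * W.lq l x) * (W.lq l y + S.p l (W.linner x y) * W.lq l x) +
      W.lq l y * W.lq l y +
      (S.p l (W.linner x y) * W.lq l x) * (S.p l (W.linner x y) * W.lq l x) := by
  have h1 : W.linner (W.lsmul (star (W.linner x y)) x) y = star (W.linner x y) * W.linner x y := by
    rw [W.linner_lsmul_left]
  have h2 : W.linner y (W.lsmul (star (W.linner x y)) x) = star (W.linner x y) * W.linner x y := by
    rw [← W.linner_star (W.lsmul (star (W.linner x y)) x) y, h1, star_mul, star_star]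
  have h3 : W.linner (y + W.lsmul (star (W.linner x y)) x) (y + W.lsmul (star (W.linner x y)) x) =
      W.linner y y + W.linner y (W.lsmul (star (W.linner x y)) x) +
      W.linner (W.lsmul (star (W.linner x y)) x) y +
      W.linner (W.lsmul (star (W.linner x y)) x) (W.lsmul (star (W.linner x y)) x) := by
    rw [W.linner_add_left, linner_add_right, linner_add_right]
    abel
  have h4 : (2:ℂ) • (star (W.linner x y) * W.linner x y) =
      W.linner (y + W.lsmul (star (W.linner x y)) x) (y + W.lsmul (star (W.linner x y)) x)
      - W.linner y y
      - W.linner (W.lsmul (star (W.linner x y)) x) (W.lsmul (star (W.linner x y)) x) := by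
    rw [two_smul, h3, h1, h2]
    abel
  have h5 : S.p l (star (W.linner x y) * W.linner x y) = S.p l (W.linner x y) * S.p l (W.linner x y) :=
    S.p_cstar l (W.linner x y)
  have h6 : W.lq l (W.lsmul (star (W.linner x y)) x) ≤ S.p l (W.linner x y) * W.lq l x := by
    calc W.lq l (W.lsmul (star (W.linner x y)) x) ≤ S.p l (star (W.linner x y)) * W.lq l x :=
          lq_lsmul_le W l (star (W.linner x y)) x
      _ = S.p l (W.linner x y) * W.lq l x := by rw [S.p_star]
  have h7 : 2 * S.p l (star (W.linner x y) * W.linner x y) ≤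
      W.lq l (y + W.lsmul (star (W.linner x y)) x) * W.lq l (y + W.lsmul (star (W.linner x y)) x)
      + W.lq l y * W.lq l y
      + W.lq l (W.lsmul (star (W.linner x y)) x) * W.lq l (W.lsmul (star (W.linner x y)) x) := by
    have e1 : S.p l ((2:ℂ) • (star (W.linner x y) * W.linner x y)) =
        2 * S.p l (star (W.linner x y) * W.linner x y) := by
      rw [map_smul_eq_mul]
      norm_num
    rw [← e1, h4]
    calc S.p l (_ - _ - _) ≤
        S.p l (W.linner (y + W.lsmul (star (W.linner x y)) x) (y + W.lsmul (star (W.linner x y)) x))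
        + S.p l (W.linner y y)
        + S.p l (W.linner (W.lsmul (star (W.linner x y)) x) (W.lsmul (star (W.linner x y)) x)) :=
          semi_sub_sub_le (S.p l) _ _ _
      _ = _ := by rw [← W.lq_sq, ← W.lq_sq, ← W.lq_sq]
  have e2 : W.lq l (y + W.lsmul (star (W.linner x y)) x) ≤
      W.lq l y + S.p l (W.linner x y) * W.lq l x := by
    calc W.lq l (y + W.lsmul (star (W.linner x y)) x) ≤
        W.lq l y + W.lq l (W.lsmul (star (W.linner x y)) x) := map_add_le_add _ _ _
      _ ≤ W.lq l y + S.p l (W.linner x y) * W.lq l x := by linarith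
  have n1 := apply_nonneg (W.lq l) (y + W.lsmul (star (W.linner x y)) x)
  have n2 := apply_nonneg (W.lq l) (W.lsmul (star (W.linner x y)) x)
  have n3 := apply_nonneg (W.lq l) y
  have n4 := apply_nonneg (S.p l) (W.linner x y)
  have n5 := apply_nonneg (W.lq l) x
  nlinarith [h7, e2, h6, h5, mul_self_nonneg (W.lq l y + S.p l (W.linner x y) * W.lq l x)]

lemma null_l (l : Λ) {x : X} (hx : W.lq l x = 0) (y : X) : S.p l (W.linner x y) = 0 := by
  have key : ∀ x' : X, W.lq l x' = 0 → S.p l (W.linner x' y) ≤ W.lq l y := by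
    intro x' hx'
    have h := base_l W l x' y
    rw [hx'] at h
    have n1 := apply_nonneg (S.p l) (W.linner x' y)
    have n2 := apply_nonneg (W.lq l) y
    nlinarith
  apply eq_zero_of_mul_le (apply_nonneg _ _) (apply_nonneg (W.lq l) y)
  intro r hr
  have hx2 : W.lq l (((r:ℝ):ℂ) • x) = 0 := by
    rw [map_smul_eq_mul, hx, mul_zero]
  have h2 := key _ hx2
  rw [W.linner_csmul_left, map_smul_eq_mul, Complex.norm_real, Real.norm_eq_abs,
    abs_of_pos hr] at h2
  exact h2

lemma cs_l (l : Λ) (x y : X) : S.p l (W.linner x y) ≤ 4 * (W.lq l x * W.lq l y) := by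
  rcases eq_or_lt_of_le (apply_nonneg (W.lq l) x) with hx | hx
  · rw [null_l W l hx.symm y]
    have := apply_nonneg (W.lq l) y
    nlinarith
  · have hcpos : 0 < 1 / (2 * W.lq l x) := by positivity
    have hq : W.lq l ((((1 / (2 * W.lq l x)):ℝ):ℂ) • x) = 1/2 := by
      rw [map_smul_eq_mul, Complex.norm_real, Real.norm_eq_abs, abs_of_pos hcpos]
      field_simp
    have h := base_l W l ((((1 / (2 * W.lq l x)):ℝ):ℂ) • x) y
    rw [W.linner_csmul_left, map_smul_eq_mul, Complex.norm_real, Real.norm_eq_abs,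
      abs_of_pos hcpos, hq] at h
    have n1 := apply_nonneg (W.lq l) y
    have n2 := apply_nonneg (S.p l) (W.linner x y)
    have key : (1 / (2 * W.lq l x)) * S.p l (W.linner x y) ≤ 2 * W.lq l y := by
      nlinarith [mul_nonneg (le_of_lt hcpos) n2]
    rw [div_mul_eq_mul_div, one_mul, div_le_iff₀ (by positivity)] at key
    nlinarith

lemma lq_le_two_q (l : Λ) (v : X) : W.lq l v ≤ 2 * W.q l v := by
  have key : (W.lq l v * W.lq l v) * (W.lq l v * W.lq l v) ≤
      4 * ((W.q l v * W.q l v) * (W.lq l v * W.lq l v)) := by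
    have h0 : W.lq l v * W.lq l v = S.p l (W.linner v v) := W.lq_sq l v
    have h1 : S.p l (W.linner v v) * S.p l (W.linner v v) = S.p l (W.linner v v * W.linner v v) := by
      have h := S.p_cstar l (W.linner v v)
      rw [W.linner_star] at h
      exact h.symm
    have h2 : W.linner v v * W.linner v v = W.linner (W.smul v (W.inner v v)) v := by
      rw [← W.bimodule_rel v v v]
      exact (W.linner_lsmul_left (W.linner v v) v v).symm
    have h3 : S.p l (W.linner (W.smul v (W.inner v v)) v) ≤
        4 * (W.lq l (W.smul v (W.inner v v)) * W.lq l v) := cs_l W l _ v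
    have h4 : W.lq l (W.smul v (W.inner v v)) ≤ S.p l (W.inner v v) * W.lq l v :=
      W.lq_smul l v (W.inner v v)
    have h5 : S.p l (W.inner v v) = W.q l v * W.q l v := (W.q_sq l v).symm
    have n1 := apply_nonneg (W.lq l) v
    have n2 := apply_nonneg (W.lq l) (W.smul v (W.inner v v))
    have n3 := apply_nonneg (W.q l) v
    rw [h0, h1, h2]
    nlinarith
  rcases eq_or_lt_of_le (apply_nonneg (W.lq l) v) with h | h
  · rw [← h]
    have := apply_nonneg (W.q l) v
    nlinarith
  · have h6 : W.lq l v * W.lq l v ≤ 4 * (W.q l v * W.q l v) := by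
      nlinarith [mul_pos h h]
    apply sq_le_of_sq_le' (by positivity)
    nlinarith

/-! #### Pointwise operator bounds -/

/-- `d` acts on `X` (by `lsmul`) with pointwise bound `Cst` at level `l`. -/
def PB (W : HilbertBimod S X) (l : Λ) (d : A) (Cst : ℝ) : Prop :=
  ∀ x : X, W.q l (W.lsmul d x) ≤ Cst * W.q l x

lemma pb_basic (l : Λ) (d : A) : PB W l d (S.p l d) := fun x => W.q_lsmul l d x

lemma pb_le {l : Λ} {d : A} {C1 C2 : ℝ} (h : PB W l d C1) (hC : C1 ≤ C2) : PB W l d C2 :=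
  fun x => le_trans (h x) (mul_le_mul_of_nonneg_right hC (apply_nonneg _ _))

lemma pb_mul {l : Λ} {d d' : A} {Cd Cd' : ℝ} (hCd : 0 ≤ Cd)
    (h1 : PB W l d Cd) (h2 : PB W l d' Cd') : PB W l (d * d') (Cd * Cd') := by
  intro x
  rw [W.lsmul_mul']
  calc W.q l (W.lsmul d (W.lsmul d' x)) ≤ Cd * W.q l (W.lsmul d' x) := h1 _
    _ ≤ Cd * (Cd' * W.q l x) := mul_le_mul_of_nonneg_left (h2 x) hCd
    _ = Cd * Cd' * W.q l x := by ring

lemma pb_sub {l : Λ} {d d' : A} {Cd Cd' : ℝ}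
    (h1 : PB W l d Cd) (h2 : PB W l d' Cd') : PB W l (d - d') (Cd + Cd') := by
  intro x
  rw [lsmul_sub]
  calc W.q l (W.lsmul d x - W.lsmul d' x) ≤ W.q l (W.lsmul d x) + W.q l (W.lsmul d' x) := by
        simpa [sub_eq_add_neg, map_neg_eq_map] using
          map_add_le_add (W.q l) (W.lsmul d x) (-(W.lsmul d' x))
    _ ≤ Cd * W.q l x + Cd' * W.q l x := add_le_add (h1 x) (h2 x)
    _ = (Cd + Cd') * W.q l x := by ring

variable (C : Corr S W.toHilbertMod)

lemma adj_inner (hphi : ∀ (a : A) (x : X), C.phi a x = W.lsmul a x) (d : A) (u v : X) :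
    W.inner (W.lsmul d u) v = W.inner u (W.lsmul (star d) v) := by
  have h := C.phi_star d u v
  rwa [hphi, hphi] at h

lemma pb_star (hphi : ∀ (a : A) (x : X), C.phi a x = W.lsmul a x)
    {l : Λ} {d : A} {Cst : ℝ} (hC : 0 ≤ Cst) (h : PB W l d Cst) :
    PB W l (star d) (4 * Cst) := by
  intro y
  have h1 : W.inner (W.lsmul d (W.lsmul (star d) y)) y =
      W.inner (W.lsmul (star d) y) (W.lsmul (star d) y) :=
    adj_inner W C hphi d (W.lsmul (star d) y) y
  have h2 : W.q l (W.lsmul (star d) y) * W.q l (W.lsmul (star d) y) ≤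
      (4 * Cst * W.q l y) * W.q l (W.lsmul (star d) y) := by
    calc W.q l (W.lsmul (star d) y) * W.q l (W.lsmul (star d) y)
        = S.p l (W.inner (W.lsmul (star d) y) (W.lsmul (star d) y)) := W.q_sq l _
      _ = S.p l (W.inner (W.lsmul d (W.lsmul (star d) y)) y) := by rw [h1]
      _ ≤ 4 * (W.q l (W.lsmul d (W.lsmul (star d) y)) * W.q l y) := cs_r W l _ y
      _ ≤ 4 * ((Cst * W.q l (W.lsmul (star d) y)) * W.q l y) := by
          have hy := apply_nonneg (W.q l) y
          have hd := h (W.lsmul (star d) y)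
          nlinarith [apply_nonneg (W.q l) (W.lsmul d (W.lsmul (star d) y))]
      _ = (4 * Cst * W.q l y) * W.q l (W.lsmul (star d) y) := by ring
  rcases eq_or_lt_of_le (apply_nonneg (W.q l) (W.lsmul (star d) y)) with hw | hw
  · rw [← hw]
    have := apply_nonneg (W.q l) y
    nlinarith
  · exact le_of_mul_le_mul_right h2 hw

lemma sq_step (hphi : ∀ (a : A) (x : X), C.phi a x = W.lsmul a x) (l : Λ) (c : A) (x : X) :
    W.q l (W.lsmul c x) * W.q l (W.lsmul c x) ≤
      4 * (W.q l x * W.q l (W.lsmul (star c * c) x)) := by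
  have h1 : W.inner (W.lsmul c x) (W.lsmul c x) = W.inner x (W.lsmul (star c * c) x) := by
    rw [adj_inner W C hphi c x (W.lsmul c x), W.lsmul_mul']
  calc W.q l (W.lsmul c x) * W.q l (W.lsmul c x)
      = S.p l (W.inner (W.lsmul c x) (W.lsmul c x)) := W.q_sq l _
    _ = S.p l (W.inner x (W.lsmul (star c * c) x)) := by rw [h1]
    _ ≤ 4 * (W.q l x * W.q l (W.lsmul (star c * c) x)) := cs_r W l _ _

lemma pb_pow {l : Λ} {h : A} {Cst : ℝ} (hC : 0 ≤ Cst) (hPB : PB W l h Cst) :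
    ∀ n : ℕ, PB W l (h ^ (n + 1)) (Cst ^ (n + 1)) := by
  intro n
  induction n with
  | zero => simpa using hPB
  | succ n ih =>
      have h2 : PB W l (h ^ (n + 1) * h) (Cst ^ (n + 1) * Cst) :=
        pb_mul W (pow_nonneg hC _) ih hPB
      rw [pow_succ h (n+1), pow_succ Cst (n+1)]
      exact h2

lemma mono_sa (hphi : ∀ (a : A) (x : X), C.phi a x = W.lsmul a x)
    {l m : Λ} (hml : m ≤ l) {h : A} (hsa : star h = h) {Cst : ℝ} (hC : 0 ≤ Cst)
    (hPB : PB W l h Cst) : PB W m h (4 * Cst) := by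
  intro x
  rcases eq_or_lt_of_le (apply_nonneg (W.q m) x) with hx0 | hxpos
  · have hz : S.p m (W.inner x (W.lsmul (star h * h) x)) = 0 := null_r' W m hx0.symm _
    have hq2 : W.q m (W.lsmul h x) * W.q m (W.lsmul h x) = 0 := by
      calc W.q m (W.lsmul h x) * W.q m (W.lsmul h x)
          = S.p m (W.inner (W.lsmul h x) (W.lsmul h x)) := W.q_sq m _
        _ = S.p m (W.inner x (W.lsmul (star h * h) x)) := by
            rw [adj_inner W C hphi h x (W.lsmul h x), W.lsmul_mul']
        _ = 0 := hz
    have hq0 : W.q m (W.lsmul h x) = 0 := mul_self_eq_zero.mp hq2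
    rw [hq0, ← hx0, mul_zero]
  · -- main case : q m x > 0
    have D : ∀ k : ℕ, (4 * W.q m x) * W.q m (W.lsmul h x) ^ (2 ^ k) ≤
        (4 * W.q m x) ^ (2 ^ k) * W.q m (W.lsmul (h ^ (2 ^ k)) x) := by
      intro k
      induction k with
      | zero =>
          simp only [pow_zero, pow_one]
          exact le_of_eq rfl
      | succ k ih =>
          have hq4 : (0:ℝ) < 4 * W.q m x := by linarith
          have e : 2 ^ (k+1) = 2 ^ k + 2 ^ k := by rw [pow_succ, mul_two]
          have hGnn := apply_nonneg (W.q m) (W.lsmul (h ^ (2 ^ k)) x)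
          have hPnn : (0:ℝ) ≤ W.q m (W.lsmul h x) ^ (2 ^ k) := by positivity
          have hQnn : (0:ℝ) ≤ (4 * W.q m x) ^ (2 ^ k) := by positivity
          -- square ih
          have hsq : ((4 * W.q m x) * W.q m (W.lsmul h x) ^ (2 ^ k)) *
              ((4 * W.q m x) * W.q m (W.lsmul h x) ^ (2 ^ k)) ≤
              ((4 * W.q m x) ^ (2 ^ k) * W.q m (W.lsmul (h ^ (2 ^ k)) x)) *
              ((4 * W.q m x) ^ (2 ^ k) * W.q m (W.lsmul (h ^ (2 ^ k)) x)) :=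
            mul_self_le_mul_self (by positivity) ih
          have hstep : W.q m (W.lsmul (h ^ (2 ^ k)) x) * W.q m (W.lsmul (h ^ (2 ^ k)) x) ≤
              4 * (W.q m x * W.q m (W.lsmul (h ^ (2 ^ (k+1))) x)) := by
            have hs := sq_step W C hphi m (h ^ (2 ^ k)) x
            rw [star_pow, hsa, ← pow_add] at hs
            rw [e]
            exact hs
          -- combine
          have key : ((4 * W.q m x) * (4 * W.q m x)) * W.q m (W.lsmul h x) ^ (2 ^ (k+1)) ≤
              ((4 * W.q m x) * (4 * W.q m x)) *
                ((4 * W.q m x) ^ (2 ^ (k+1)) / (4 * W.q m x) *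
                  W.q m (W.lsmul (h ^ (2 ^ (k+1))) x)) := by
            have e2 : W.q m (W.lsmul h x) ^ (2 ^ (k+1)) =
                W.q m (W.lsmul h x) ^ (2 ^ k) * W.q m (W.lsmul h x) ^ (2 ^ k) := by
              rw [e, pow_add]
            have e3 : (4 * W.q m x) ^ (2 ^ k) * (4 * W.q m x) ^ (2 ^ k) =
                (4 * W.q m x) ^ (2 ^ (k+1)) := by
              rw [e, pow_add]
            calc ((4 * W.q m x) * (4 * W.q m x)) * W.q m (W.lsmul h x) ^ (2 ^ (k+1))
                = ((4 * W.q m x) * W.q m (W.lsmul h x) ^ (2 ^ k)) *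
                  ((4 * W.q m x) * W.q m (W.lsmul h x) ^ (2 ^ k)) := by rw [e2]; ring
              _ ≤ ((4 * W.q m x) ^ (2 ^ k) * W.q m (W.lsmul (h ^ (2 ^ k)) x)) *
                  ((4 * W.q m x) ^ (2 ^ k) * W.q m (W.lsmul (h ^ (2 ^ k)) x)) := hsq
              _ = ((4 * W.q m x) ^ (2 ^ k) * (4 * W.q m x) ^ (2 ^ k)) *
                  (W.q m (W.lsmul (h ^ (2 ^ k)) x) * W.q m (W.lsmul (h ^ (2 ^ k)) x)) := by ring
              _ ≤ ((4 * W.q m x) ^ (2 ^ k) * (4 * W.q m x) ^ (2 ^ k)) *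
                  (4 * (W.q m x * W.q m (W.lsmul (h ^ (2 ^ (k+1))) x))) := by
                  apply mul_le_mul_of_nonneg_left hstep (by positivity)
              _ = ((4 * W.q m x) * (4 * W.q m x)) *
                  (((4 * W.q m x) ^ (2 ^ k) * (4 * W.q m x) ^ (2 ^ k)) / (4 * W.q m x) *
                    W.q m (W.lsmul (h ^ (2 ^ (k+1))) x)) := by
                  field_simp
                  try ring
              _ = ((4 * W.q m x) * (4 * W.q m x)) *
                  ((4 * W.q m x) ^ (2 ^ (k+1)) / (4 * W.q m x) *
                    W.q m (W.lsmul (h ^ (2 ^ (k+1))) x)) := by rw [e3]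
          have key2 := le_of_mul_le_mul_left key (by positivity : (0:ℝ) < (4 * W.q m x) * (4 * W.q m x))
          calc (4 * W.q m x) * W.q m (W.lsmul h x) ^ (2 ^ (k+1))
              ≤ (4 * W.q m x) * ((4 * W.q m x) ^ (2 ^ (k+1)) / (4 * W.q m x) *
                  W.q m (W.lsmul (h ^ (2 ^ (k+1))) x)) :=
                mul_le_mul_of_nonneg_left key2 (by positivity)
            _ = (4 * W.q m x) ^ (2 ^ (k+1)) * W.q m (W.lsmul (h ^ (2 ^ (k+1))) x) := by
                field_simp
                try ring
    -- bound the tail by level l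
    have hfin : ∀ k : ℕ, W.q m (W.lsmul h x) ^ (2 ^ k) ≤
        (4 * Cst * W.q m x) ^ (2 ^ k) * (W.q l x / (4 * W.q m x)) := by
      intro k
      have hD := D k
      have htail : W.q m (W.lsmul (h ^ (2 ^ k)) x) ≤ Cst ^ (2 ^ k) * W.q l x := by
        have h1 : W.q m (W.lsmul (h ^ (2 ^ k)) x) ≤ W.q l (W.lsmul (h ^ (2 ^ k)) x) :=
          q_mono W hml _
        have e4 : 2 ^ k = (2 ^ k - 1) + 1 := by
          have := Nat.one_le_two_pow (n := k)
          omega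
        have h2 : W.q l (W.lsmul (h ^ (2 ^ k)) x) ≤ Cst ^ (2 ^ k) * W.q l x := by
          rw [e4]
          exact pb_pow W hC hPB (2 ^ k - 1) x
        linarith
      have hmain : (4 * W.q m x) * W.q m (W.lsmul h x) ^ (2 ^ k) ≤
          (4 * W.q m x) ^ (2 ^ k) * (Cst ^ (2 ^ k) * W.q l x) := by
        calc (4 * W.q m x) * W.q m (W.lsmul h x) ^ (2 ^ k)
            ≤ (4 * W.q m x) ^ (2 ^ k) * W.q m (W.lsmul (h ^ (2 ^ k)) x) := hD
          _ ≤ (4 * W.q m x) ^ (2 ^ k) * (Cst ^ (2 ^ k) * W.q l x) :=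
              mul_le_mul_of_nonneg_left htail (by positivity)
      rw [mul_pow, ← sub_nonneg]
      have e5 : (4 * Cst) ^ (2^k) * W.q m x ^ (2^k) * (W.q l x / (4 * W.q m x)) -
          W.q m (W.lsmul h x) ^ (2 ^ k) =
          ((4 * W.q m x) ^ (2 ^ k) * (Cst ^ (2 ^ k) * W.q l x) -
            (4 * W.q m x) * W.q m (W.lsmul h x) ^ (2 ^ k)) / (4 * W.q m x) := by
        field_simp
        ring
      rw [e5]
      apply div_nonneg _ (by positivity)
      linarith
    have hres := pow_limit_le (apply_nonneg _ _)
      (by positivity : (0:ℝ) ≤ 4 * Cst * W.q m x) hfin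
    calc W.q m (W.lsmul h x) ≤ 4 * Cst * W.q m x := hres
      _ = 4 * Cst * W.q m x := rfl

lemma pb_mono (hphi : ∀ (a : A) (x : X), C.phi a x = W.lsmul a x)
    {l m : Λ} (hml : m ≤ l) {d : A} {Cst : ℝ} (hC : 0 ≤ Cst)
    (hPB : PB W l d Cst) : PB W m d (8 * Cst) := by
  have hsd : PB W l (star d) (4 * Cst) := pb_star W C hphi hC hPB
  have hh : PB W l (star d * d) (4 * Cst * Cst) := pb_mul W (by positivity) hsd hPB
  have hsa : star (star d * d) = star d * d := by rw [star_mul, star_star]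
  have hmono : PB W m (star d * d) (4 * (4 * Cst * Cst)) :=
    mono_sa W C hphi hml hsa (by positivity) hh
  intro x
  have hstep := sq_step W C hphi m d x
  have hx := apply_nonneg (W.q m) x
  have h2 : W.q m (W.lsmul d x) * W.q m (W.lsmul d x) ≤
      (8 * Cst * W.q m x) * (8 * Cst * W.q m x) := by
    have h3 := hmono x
    nlinarith [apply_nonneg (W.q m) (W.lsmul (star d * d) x)]
  exact sq_le_of_sq_le' (by positivity) h2

/-! #### `opSemi` conversions -/

lemma phi_zero : C.phi 0 = 0 := by
  have h := C.phi_csmul 0 0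
  rw [zero_smul, zero_smul] at h
  exact h

lemma phi_fun_sub (hphi : ∀ (a : A) (x : X), C.phi a x = W.lsmul a x) (a b : A) :
    C.phi a - C.phi b = C.phi (a - b) := by
  funext z
  simp only [Pi.sub_apply]
  rw [hphi, hphi, hphi, ← lsmul_sub]

lemma op_bdd (hphi : ∀ (a : A) (x : X), C.phi a x = W.lsmul a x) (l : Λ) (d : A) :
    BddAbove ((fun x => W.toHilbertMod.q l (C.phi d x)) '' {x | W.toHilbertMod.q l x ≤ 1}) := by
  refine ⟨S.p l d, ?_⟩
  rintro r ⟨x, hx, rfl⟩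
  simp only [Set.mem_setOf_eq] at hx
  show W.toHilbertMod.q l (C.phi d x) ≤ S.p l d
  rw [hphi]
  calc W.q l (W.lsmul d x) ≤ S.p l d * W.q l x := W.q_lsmul l d x
    _ ≤ S.p l d * 1 := mul_le_mul_of_nonneg_left hx (apply_nonneg _ _)
    _ = S.p l d := mul_one _

lemma op_zero_mem (hphi : ∀ (a : A) (x : X), C.phi a x = W.lsmul a x) (l : Λ) (d : A) :
    (0:ℝ) ∈ ((fun x => W.toHilbertMod.q l (C.phi d x)) '' {x | W.toHilbertMod.q l x ≤ 1}) := by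
  refine ⟨0, ?_, ?_⟩
  · simp only [Set.mem_setOf_eq, map_zero]
    norm_num
  · show W.toHilbertMod.q l (C.phi d 0) = 0
    rw [hphi, lsmul_zero, map_zero]

lemma op_le_of_pb (hphi : ∀ (a : A) (x : X), C.phi a x = W.lsmul a x)
    {l : Λ} {d : A} {Cst : ℝ} (hC : 0 ≤ Cst) (hPB : PB W l d Cst) :
    opSemi W.toHilbertMod l (C.phi d) ≤ Cst := by
  unfold opSemi
  apply csSup_le ⟨0, op_zero_mem W C hphi l d⟩
  rintro r ⟨x, hx, rfl⟩
  simp only [Set.mem_setOf_eq] at hx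
  show W.toHilbertMod.q l (C.phi d x) ≤ Cst
  rw [hphi]
  calc W.q l (W.lsmul d x) ≤ Cst * W.q l x := hPB x
    _ ≤ Cst * 1 := mul_le_mul_of_nonneg_left hx hC
    _ = Cst := mul_one _

lemma pb_of_op (hphi : ∀ (a : A) (x : X), C.phi a x = W.lsmul a x)
    {l : Λ} {d : A} {Cst : ℝ} (hC : 0 ≤ Cst)
    (hop : opSemi W.toHilbertMod l (C.phi d) ≤ Cst) : PB W l d Cst := by
  intro x
  rcases eq_or_lt_of_le (apply_nonneg (W.q l) x) with hx0 | hxpos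
  · have h := W.q_lsmul l d x
    rw [← hx0, mul_zero] at h
    rw [← hx0, mul_zero]
    exact h
  · have hq1 : W.q l ((((W.q l x)⁻¹ : ℝ):ℂ) • x) = 1 := by
      rw [map_smul_eq_mul, Complex.norm_real, Real.norm_eq_abs, abs_of_pos (by positivity)]
      field_simp
    have hmem : W.q l (C.phi d ((((W.q l x)⁻¹ : ℝ):ℂ) • x)) ≤
        opSemi W.toHilbertMod l (C.phi d) := by
      apply le_csSup (op_bdd W C hphi l d)
      refine ⟨(((W.q l x)⁻¹ : ℝ):ℂ) • x, ?_, rfl⟩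
      simp only [Set.mem_setOf_eq]
      rw [hq1]
    rw [hphi, W.lsmul_csmul', map_smul_eq_mul, Complex.norm_real, Real.norm_eq_abs,
      abs_of_pos (by positivity)] at hmem
    have h2 : (W.q l x)⁻¹ * W.q l (W.lsmul d x) ≤ Cst := le_trans hmem hop
    have h3 := mul_le_mul_of_nonneg_left h2 (le_of_lt hxpos)
    have e : W.q l x * ((W.q l x)⁻¹ * W.q l (W.lsmul d x)) = W.q l (W.lsmul d x) := by
      field_simp
    rw [e] at h3
    linarith [h3]

lemma op_zero_of_pb (hphi : ∀ (a : A) (x : X), C.phi a x = W.lsmul a x)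
    {l : Λ} {d : A} (h : PB W l d 0) : opSemi W.toHilbertMod l (C.phi d) = 0 := by
  apply le_antisymm
  · have := op_le_of_pb W C hphi le_rfl h
    exact this
  · exact le_csSup (op_bdd W C hphi l d) (op_zero_mem W C hphi l d)

/-! #### The ideal spanned by left inner products -/

lemma linner_mul_right (x y : X) (d : A) :
    W.linner x y * d = W.linner x (W.lsmul (star d) y) := by
  have h := W.linner_lsmul_left (star d) y x
  have h2 := congrArg star h
  rw [W.linner_star, star_mul, star_star, W.linner_star] at h2
  exact h2.symm

lemma linner_mul_star_right (x y : X) (d : A) :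
    W.linner x y * star d = W.linner x (W.lsmul d y) := by
  rw [linner_mul_right, star_star]

lemma sp_mulR {t : A} (ht : t ∈ Submodule.span ℂ (LSet W)) (d : A) :
    t * d ∈ Submodule.span ℂ (LSet W) := by
  induction ht using Submodule.span_induction with
  | mem a ha =>
      obtain ⟨x, y, rfl⟩ := ha
      exact Submodule.subset_span ⟨x, W.lsmul (star d) y, linner_mul_right W x y d⟩
  | zero => rw [zero_mul]; exact Submodule.zero_mem _
  | add a b _ _ iha ihb => rw [add_mul]; exact Submodule.add_mem _ iha ihb
  | smul c a _ iha => rw [smul_mul_assoc]; exact Submodule.smul_mem _ _ iha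

lemma sp_star {t : A} (ht : t ∈ Submodule.span ℂ (LSet W)) :
    star t ∈ Submodule.span ℂ (LSet W) := by
  induction ht using Submodule.span_induction with
  | mem a ha =>
      obtain ⟨x, y, rfl⟩ := ha
      rw [W.linner_star]
      exact Submodule.subset_span ⟨y, x, rfl⟩
  | zero => rw [star_zero]; exact Submodule.zero_mem _
  | add a b _ _ iha ihb => rw [star_add]; exact Submodule.add_mem _ iha ihb
  | smul c a _ iha =>
      rw [Algebra.smul_def, star_mul]
      exact sp_mulR W iha _

lemma phi_theta (hphi : ∀ (a : A) (x : X), C.phi a x = W.lsmul a x) (x y : X) :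
    C.phi (W.linner x y) = thetaOp W.toHilbertMod x y := by
  funext z
  rw [hphi]
  exact W.bimodule_rel x y z

lemma theta_mem_span (hphi : ∀ (a : A) (x : X), C.phi a x = W.lsmul a x)
    {k : X → X} (hk : k ∈ thetaSpan W.toHilbertMod) :
    ∃ s ∈ Submodule.span ℂ (LSet W), C.phi s = k := by
  induction hk using Submodule.span_induction with
  | mem T hT =>
      obtain ⟨y, x, rfl⟩ := hT
      exact ⟨W.linner y x, Submodule.subset_span ⟨y, x, rfl⟩, phi_theta W C hphi y x⟩
  | zero => exact ⟨0, Submodule.zero_mem _, phi_zero W C⟩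
  | add a b _ _ iha ihb =>
      obtain ⟨s1, hs1, rfl⟩ := iha
      obtain ⟨s2, hs2, rfl⟩ := ihb
      exact ⟨s1 + s2, Submodule.add_mem _ hs1 hs2, (C.phi_add s1 s2)⟩
  | smul c a _ iha =>
      obtain ⟨s, hs, rfl⟩ := iha
      exact ⟨c • s, Submodule.smul_mem _ _ hs, (C.phi_csmul c s)⟩

lemma span_mem_theta (hphi : ∀ (a : A) (x : X), C.phi a x = W.lsmul a x)
    {s : A} (hs : s ∈ Submodule.span ℂ (LSet W)) :
    C.phi s ∈ thetaSpan W.toHilbertMod := by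
  induction hs using Submodule.span_induction with
  | mem a ha =>
      obtain ⟨x, y, rfl⟩ := ha
      rw [phi_theta W C hphi x y]
      exact Submodule.subset_span ⟨x, y, rfl⟩
  | zero => rw [phi_zero W C]; exact Submodule.zero_mem _
  | add a b _ _ iha ihb => rw [C.phi_add]; exact Submodule.add_mem _ iha ihb
  | smul c a _ iha => rw [C.phi_csmul]; exact Submodule.smul_mem _ _ iha

/-! #### Weighted representations and the key norm estimate on the ideal -/

/-- The element represented by a list of triples `(c, x, y) ↦ c • ⟨x,y⟩_left`. -/
def wtL (W : HilbertBimod S X) (L : List (ℂ × X × X)) : A :=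
  (L.map (fun u => u.1 • W.linner u.2.1 u.2.2)).sum

/-- The weight of a list representation at level `l`. -/
def wtW (W : HilbertBimod S X) (l : Λ) (L : List (ℂ × X × X)) : ℝ :=
  (L.map (fun u => ‖u.1‖ * (W.lq l u.2.1 * W.q l u.2.2))).sum

lemma wtW_nonneg (l : Λ) (L : List (ℂ × X × X)) : 0 ≤ wtW W l L := by
  apply List.sum_nonneg
  intro r hr
  simp only [List.mem_map] at hr
  obtain ⟨u, _, rfl⟩ := hr
  exact mul_nonneg (norm_nonneg _) (mul_nonneg (apply_nonneg _ _) (apply_nonneg _ _))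

lemma wt_exists {t : A} (ht : t ∈ Submodule.span ℂ (LSet W)) :
    ∃ L : List (ℂ × X × X), t = wtL W L := by
  induction ht using Submodule.span_induction with
  | mem a ha =>
      obtain ⟨x, y, rfl⟩ := ha
      exact ⟨[(1, x, y)], by simp [wtL]⟩
  | zero => exact ⟨[], by simp [wtL]⟩
  | add a b _ _ iha ihb =>
      obtain ⟨L1, rfl⟩ := iha
      obtain ⟨L2, rfl⟩ := ihb
      exact ⟨L1 ++ L2, by simp [wtL]⟩
  | smul c a _ iha =>
      obtain ⟨L, rfl⟩ := iha
      refine ⟨L.map (fun u => (c * u.1, u.2)), ?_⟩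
      simp only [wtL, List.map_map]
      rw [List.smul_sum, List.map_map]
      have e : ((fun x => c • x) ∘ fun u : ℂ × X × X => u.1 • W.linner u.2.1 u.2.2) =
          ((fun u : ℂ × X × X => u.1 • W.linner u.2.1 u.2.2) ∘ fun u : ℂ × X × X => (c * u.1, u.2)) := by
        funext u
        simp [Function.comp, mul_smul]
      rw [e]

lemma wt_p_le (l : Λ) (L : List (ℂ × X × X)) : S.p l (wtL W L) ≤ 8 * wtW W l L := by
  induction L with
  | nil => simp [wtL, wtW]
  | cons u L ih =>
      obtain ⟨c, x, y⟩ := u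
      have h1 : S.p l (wtL W ((c,x,y) :: L)) ≤ ‖c‖ * S.p l (W.linner x y) + S.p l (wtL W L) := by
        simp only [wtL, List.map_cons, List.sum_cons]
        calc S.p l (c • W.linner x y + (L.map (fun u => u.1 • W.linner u.2.1 u.2.2)).sum)
            ≤ S.p l (c • W.linner x y) +
              S.p l ((L.map (fun u => u.1 • W.linner u.2.1 u.2.2)).sum) := map_add_le_add _ _ _
          _ = ‖c‖ * S.p l (W.linner x y) +
              S.p l ((L.map (fun u => u.1 • W.linner u.2.1 u.2.2)).sum) := by
              rw [map_smul_eq_mul]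
      have h2 : S.p l (W.linner x y) ≤ 4 * (W.lq l x * W.lq l y) := cs_l W l x y
      have h3 : W.lq l y ≤ 2 * W.q l y := lq_le_two_q W l y
      have h4 : wtW W l ((c,x,y) :: L) = ‖c‖ * (W.lq l x * W.q l y) + wtW W l L := by
        simp [wtW]
      have h5 : S.p l (W.linner x y) ≤ 8 * (W.lq l x * W.q l y) := by
        nlinarith [apply_nonneg (W.lq l) x, apply_nonneg (W.q l) y, apply_nonneg (W.lq l) y]
      have h6 : ‖c‖ * S.p l (W.linner x y) ≤ ‖c‖ * (8 * (W.lq l x * W.q l y)) :=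
        mul_le_mul_of_nonneg_left h5 (norm_nonneg c)
      rw [h4]
      have := ih
      simp only [wtL] at h1 this ⊢
      nlinarith [this]

lemma wtL_mul_star (d : A) (L : List (ℂ × X × X)) :
    wtL W L * star d = wtL W (L.map (fun u => (u.1, u.2.1, W.lsmul d u.2.2))) := by
  induction L with
  | nil => simp [wtL]
  | cons u L ih =>
      obtain ⟨c, x, y⟩ := u
      simp only [wtL, List.map_cons, List.sum_cons, List.map_map] at ih ⊢
      rw [add_mul, ih]
      congr 1
      rw [smul_mul_assoc, linner_mul_star_right]

lemma wtW_mul_star (l : Λ) {d : A} {Cd : ℝ} (hCd : 0 ≤ Cd) (hPB : PB W l d Cd)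
    (L : List (ℂ × X × X)) :
    wtW W l (L.map (fun u => (u.1, u.2.1, W.lsmul d u.2.2))) ≤ Cd * wtW W l L := by
  induction L with
  | nil => simp [wtW]
  | cons u L ih =>
      obtain ⟨c, x, y⟩ := u
      simp only [wtW, List.map_cons, List.sum_cons, List.map_map] at ih ⊢
      have h0 : (‖c‖ * W.lq l x) * W.q l (W.lsmul d y) ≤ (‖c‖ * W.lq l x) * (Cd * W.q l y) :=
        mul_le_mul_of_nonneg_left (hPB y) (mul_nonneg (norm_nonneg c) (apply_nonneg _ _))
      nlinarith [ih]

/-- The key estimate: on the ideal `span(LSet)`, the seminorm `p_l` is controlled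
by the operator bound with an absolute constant. -/
lemma crux (hphi : ∀ (a : A) (x : X), C.phi a x = W.lsmul a x) {l : Λ} {t : A}
    (ht : t ∈ Submodule.span ℂ (LSet W)) {Cst : ℝ} (hC : 0 ≤ Cst)
    (hPB : PB W l t Cst) : S.p l t ≤ 4 * Cst := by
  obtain ⟨L0, rfl⟩ := wt_exists W ht
  rcases eq_or_lt_of_le hC with hC0 | hCpos
  · -- Cst = 0
    have h1 : S.p l (wtL W L0) * S.p l (wtL W L0) = S.p l (wtL W L0 * star (wtL W L0)) :=
      (p_mul_star_self l _).symm
    have h2 := wtL_mul_star W (wtL W L0) L0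
    have h3 := wt_p_le W l (L0.map (fun u => (u.1, u.2.1, W.lsmul (wtL W L0) u.2.2)))
    have hPB0 : PB W l (wtL W L0) 0 := by rw [hC0]; exact hPB
    have h4 := wtW_mul_star W l le_rfl hPB0 L0
    rw [zero_mul] at h4
    have h5 : S.p l (wtL W L0) * S.p l (wtL W L0) ≤ 0 := by
      rw [h1, h2]
      have h6 := wtW_nonneg W l (L0.map (fun u => (u.1, u.2.1, W.lsmul (wtL W L0) u.2.2)))
      linarith
    have h7 : S.p l (wtL W L0) = 0 := mul_self_eq_zero.mp
      (le_antisymm h5 (mul_self_nonneg _))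
    rw [h7, ← hC0]
    norm_num
  · -- main iteration
    have key : ∀ k : ℕ, ∃ (Ck : ℝ) (Lk : List (ℂ × X × X)),
        0 ≤ Ck ∧ PB W l (wtL W Lk) Ck ∧
        S.p l (wtL W L0) ^ (2 ^ k) = S.p l (wtL W Lk) ∧
        4 * Ck ≤ (4 * Cst) ^ (2 ^ k) ∧
        wtW W l Lk * (4 * Cst) ≤ wtW W l L0 * (4 * Cst) ^ (2 ^ k) := by
      intro k
      induction k with
      | zero =>
          refine ⟨Cst, L0, hC, hPB, by simp, by simp, by simp⟩
      | succ k ih =>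
          obtain ⟨Ck, Lk, hCk, hPBk, hpk, hCb, hwb⟩ := ih
          have e : 2 ^ (k+1) = 2 ^ k + 2 ^ k := by rw [pow_succ, mul_two]
          have hM : (0:ℝ) ≤ (4 * Cst) ^ (2 ^ k) := by positivity
          have hCk' : Ck ≤ (4 * Cst) ^ (2 ^ k) := by linarith
          have hw0 : 0 ≤ wtW W l L0 := wtW_nonneg W l L0
          have hwLk : 0 ≤ wtW W l Lk := wtW_nonneg W l Lk
          refine ⟨Ck * (4 * Ck), Lk.map (fun u => (u.1, u.2.1, W.lsmul (wtL W Lk) u.2.2)),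
            by positivity, ?_, ?_, ?_, ?_⟩
          · rw [← wtL_mul_star]
            exact pb_mul W hCk hPBk (pb_star W C hphi hCk hPBk)
          · rw [← wtL_mul_star, p_mul_star_self, ← hpk, e, pow_add]
          · calc 4 * (Ck * (4 * Ck)) = (4 * Ck) * (4 * Ck) := by ring
              _ ≤ (4 * Cst) ^ (2 ^ k) * (4 * Cst) ^ (2 ^ k) := by nlinarith
              _ = (4 * Cst) ^ (2 ^ (k+1)) := by rw [e, pow_add]
          · have hW1 := wtW_mul_star W l hCk hPBk Lk
            calc wtW W l (Lk.map (fun u => (u.1, u.2.1, W.lsmul (wtL W Lk) u.2.2))) * (4 * Cst)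
                ≤ (Ck * wtW W l Lk) * (4 * Cst) :=
                  mul_le_mul_of_nonneg_right hW1 (by positivity)
              _ = Ck * (wtW W l Lk * (4 * Cst)) := by ring
              _ ≤ Ck * (wtW W l L0 * (4 * Cst) ^ (2 ^ k)) :=
                  mul_le_mul_of_nonneg_left hwb hCk
              _ ≤ (4 * Cst) ^ (2 ^ k) * (wtW W l L0 * (4 * Cst) ^ (2 ^ k)) :=
                  mul_le_mul_of_nonneg_right hCk' (by positivity)
              _ = wtW W l L0 * (4 * Cst) ^ (2 ^ (k+1)) := by rw [e, pow_add]; ring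
    have hfin : ∀ k : ℕ, S.p l (wtL W L0) ^ (2 ^ k) ≤
        (4 * Cst) ^ (2 ^ k) * (8 * wtW W l L0 / (4 * Cst)) := by
      intro k
      obtain ⟨Ck, Lk, hCk, hPBk, hpk, hCb, hwb⟩ := key k
      rw [hpk]
      have h8 := wt_p_le W l Lk
      have hstep : S.p l (wtL W Lk) * (4 * Cst) ≤ (4 * Cst) ^ (2 ^ k) * (8 * wtW W l L0) := by
        calc S.p l (wtL W Lk) * (4 * Cst) ≤ (8 * wtW W l Lk) * (4 * Cst) :=
              mul_le_mul_of_nonneg_right h8 (by positivity)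
          _ = 8 * (wtW W l Lk * (4 * Cst)) := by ring
          _ ≤ 8 * (wtW W l L0 * (4 * Cst) ^ (2 ^ k)) := by linarith
          _ = (4 * Cst) ^ (2 ^ k) * (8 * wtW W l L0) := by ring
      rw [mul_div_assoc'] at *
      rw [le_div_iff₀ (by positivity : (0:ℝ) < 4 * Cst)]
      exact hstep
    exact pow_limit_le (apply_nonneg _ _) (by positivity : (0:ℝ) ≤ 4 * Cst) hfin

end Stmt14

end Stmt14Aux

/-- Let `X` be a Hilbert `A`–`A` pro-C*-bimodule, viewed as a
pro-C*-correspondence over `A` with left action `φ_X(a)x = ax`.  Then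
`𝒥_X = _AI`. -/
theorem stmt_14 {Λ : Type} [Preorder Λ] [Nonempty Λ] [IsDirected Λ (· ≤ ·)]
    {A : Type} [Ring A] [StarRing A] [Algebra ℂ A] {S : ProCStar Λ A}
    {X : Type} [AddCommGroup X] [Module ℂ X] (W : HilbertBimod S X)
    (C : Corr S W.toHilbertMod) (hphi : ∀ (a : A) (x : X), C.phi a x = W.lsmul a x) :
    JX C = leftIdealSet W := by
  open Stmt14 in
  apply Set.Subset.antisymm
  · -- 𝒥_X ⊆ _AI
    intro a ha
    have hmemK : ∀ l : Λ, memKlevel W.toHilbertMod l (C.phi a) :=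
      fun l => (Set.mem_iInter.mp ha l).1
    have hann : ∀ l : Λ, ∀ b : A, opSemi W.toHilbertMod l (C.phi b) = 0 → S.p l (a * b) = 0 :=
      fun l => (Set.mem_iInter.mp ha l).2
    -- approximants
    have happ : ∀ (l : Λ) (ε : ℝ), 0 < ε →
        ∃ s ∈ Submodule.span ℂ (LSet W), PB W l (a - s) ε := by
      intro l ε hε
      obtain ⟨k, hk, hlt⟩ := hmemK l ε hε
      obtain ⟨s, hs, rfl⟩ := theta_mem_span W C hphi hk
      refine ⟨s, hs, ?_⟩
      apply pb_of_op W C hphi (le_of_lt hε)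
      rw [← phi_fun_sub W C hphi]
      exact le_of_lt hlt
    choose sfun hsfun_mem hsfun_pb using
      fun (i : Λ × ℕ) => happ i.1 (1 / (i.2 + 1)) (by positivity)
    haveI hdir : IsDirected (Λ × ℕ) (· ≤ ·) := ⟨fun i j => by
      obtain ⟨l, hl1, hl2⟩ := directed_of (· ≤ ·) i.1 j.1
      exact ⟨(l, max i.2 j.2), Prod.le_def.mpr ⟨hl1, le_max_left _ _⟩,
        Prod.le_def.mpr ⟨hl2, le_max_right _ _⟩⟩⟩
    haveI hFatop : (Filter.atTop : Filter (Λ × ℕ)).NeBot :=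
      Filter.atTop_neBot_iff.mpr ⟨inferInstance, hdir⟩
    -- pairwise estimate for approximants
    have hclose : ∀ (m : Λ) (n : ℕ) (i j : Λ × ℕ), (m, n) ≤ i → (m, n) ≤ j →
        S.p m (sfun i - sfun j) ≤ 64 / (n + 1) := by
      intro m n i j hi hj
      have hkey : ∀ i' : Λ × ℕ, (m, n) ≤ i' → PB W m (a - sfun i') (8 * (1 / (n + 1))) := by
        intro i' hi'
        have h1 : PB W m (a - sfun i') (8 * (1 / (i'.2 + 1))) :=
          pb_mono W C hphi hi'.1 (by positivity) (hsfun_pb i')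
        apply pb_le W h1
        have h2 : ((n:ℝ) + 1) ≤ (i'.2 + 1) := by
          have : (n:ℝ) ≤ i'.2 := by exact_mod_cast hi'.2
          linarith
        have h3 : (1:ℝ) / (i'.2 + 1) ≤ 1 / (n + 1) :=
          one_div_le_one_div_of_le (by positivity) h2
        linarith
      have hpbd : PB W m (sfun i - sfun j) (8 * (1 / (n + 1)) + 8 * (1 / (n + 1))) := by
        have e : sfun i - sfun j = (a - sfun j) - (a - sfun i) := by abel
        rw [e]
        exact pb_sub W (hkey j hj) (hkey i hi)
      have hspan : sfun i - sfun j ∈ Submodule.span ℂ (LSet W) :=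
        Submodule.sub_mem _ (hsfun_mem i) (hsfun_mem j)
      have h4 := crux W C hphi hspan (by positivity) hpbd
      calc S.p m (sfun i - sfun j) ≤ 4 * (8 * (1 / (n + 1)) + 8 * (1 / (n + 1))) := h4
        _ = 64 / (n + 1) := by ring
    -- the filter of approximants is Cauchy
    have hcauchy : ∀ (m : Λ) (ε : ℝ), 0 < ε →
        ∃ s ∈ Filter.map sfun (Filter.atTop : Filter (Λ × ℕ)),
          ∀ x ∈ s, ∀ y ∈ s, S.p m (x - y) < ε := by
      intro m ε hε
      obtain ⟨n, hn⟩ := exists_nat_gt (64 / ε)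
      refine ⟨sfun '' {i | (m, n) ≤ i},
        Filter.image_mem_map (Filter.mem_atTop (m, n)), ?_⟩
      rintro x ⟨i, hi, rfl⟩ y ⟨j, hj, rfl⟩
      have h := hclose m n i j hi hj
      have h2 : (64:ℝ) / (n + 1) < ε := by
        rw [div_lt_iff₀ (by positivity)]
        rw [div_lt_iff₀ hε] at hn
        nlinarith
      linarith
    obtain ⟨z, hz⟩ := S.complete (Filter.map sfun Filter.atTop) Filter.map_neBot hcauchy
    -- extraction of good approximants of the limit
    have hext : ∀ (m : Λ) (η : ℝ), 0 < η → ∃ s ∈ Submodule.span ℂ (LSet W),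
        S.p m (s - z) < η ∧ PB W m (a - s) η := by
      intro m η hη
      obtain ⟨T, hTF, hT⟩ := hz m η hη
      obtain ⟨n, hn⟩ := exists_nat_gt (8 / η)
      have hsec : (sfun ⁻¹' T ∩ {i | (m, n) ≤ i}).Nonempty :=
        Filter.NeBot.nonempty_of_mem hFatop
          (Filter.inter_mem (Filter.mem_map.mp hTF) (Filter.mem_atTop (m, n)))
      obtain ⟨i, hiT, hige⟩ := hsec
      refine ⟨sfun i, hsfun_mem i, hT _ hiT, ?_⟩
      have h2 : PB W m (a - sfun i) (8 * (1 / (i.2 + 1))) :=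
        pb_mono W C hphi hige.1 (by positivity) (hsfun_pb i)
      apply pb_le W h2
      have hi2 : (n:ℝ) ≤ i.2 := by exact_mod_cast hige.2
      rw [div_lt_iff₀ hη] at hn
      rw [mul_one_div, div_le_iff₀ (by positivity)]
      nlinarith
    -- p_m (a - z) = 0 for every level m
    have hclaim : ∀ m : Λ, S.p m (a - z) = 0 := by
      intro m
      have hPB0 : PB W m (a - z) 0 := by
        intro x
        rw [zero_mul]
        have hb : ∀ η : ℝ, 0 < η → W.q m (W.lsmul (a - z) x) ≤ η * (2 * W.q m x) := by
          intro η hη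
          obtain ⟨s, hsmem, hsz, hspb⟩ := hext m η hη
          have e : W.lsmul (a - z) x = W.lsmul (a - s) x + W.lsmul (s - z) x := by
            rw [← W.add_lsmul']
            congr 1
            abel
          rw [e]
          have h1 : W.q m (W.lsmul (s - z) x) ≤ S.p m (s - z) * W.q m x := W.q_lsmul m _ x
          have h2 : S.p m (s - z) * W.q m x ≤ η * W.q m x :=
            mul_le_mul_of_nonneg_right (le_of_lt hsz) (apply_nonneg _ _)
          calc W.q m (W.lsmul (a - s) x + W.lsmul (s - z) x)
              ≤ W.q m (W.lsmul (a - s) x) + W.q m (W.lsmul (s - z) x) := map_add_le_add _ _ _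
            _ ≤ η * W.q m x + η * W.q m x := by
                have := hspb x
                linarith
            _ = η * (2 * W.q m x) := by ring
        have h0 := eq_zero_of_le_eta (apply_nonneg _ _) hb
        exact le_of_eq h0
      have hPB0s : PB W m (star (a - z)) 0 := by
        have h := pb_star W C hphi le_rfl hPB0
        rw [mul_zero] at h
        exact h
      have hop0 : opSemi W.toHilbertMod m (C.phi (star (a - z))) = 0 :=
        op_zero_of_pb W C hphi hPB0s
      have h3 : S.p m (a * star (a - z)) = 0 := hann m (star (a - z)) hop0
      have h4 : S.p m (z * star (a - z)) = 0 := by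
        apply eq_zero_of_le_eta (apply_nonneg _ _) (K := S.p m (a - z))
        intro η hη
        obtain ⟨s, hsmem, hsz, _⟩ := hext m η hη
        have h5 : S.p m (s * star (a - z)) = 0 := by
          have hspan : s * star (a - z) ∈ Submodule.span ℂ (LSet W) := sp_mulR W hsmem _
          have hPBs : PB W m (s * star (a - z)) (S.p m s * 0) :=
            pb_mul W (apply_nonneg _ _) (pb_basic W m s) hPB0s
          rw [mul_zero] at hPBs
          have h6 := crux W C hphi hspan le_rfl hPBs
          have h7 := apply_nonneg (S.p m) (s * star (a - z))
          linarith
        have e : z * star (a - z) = (z - s) * star (a - z) + s * star (a - z) := by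
          rw [sub_mul, sub_add_cancel]
        have h8 : S.p m (z * star (a - z)) ≤
            S.p m ((z - s) * star (a - z)) + S.p m (s * star (a - z)) := by
          rw [e]
          exact map_add_le_add _ _ _
        have h9 : S.p m ((z - s) * star (a - z)) ≤ S.p m (z - s) * S.p m (star (a - z)) :=
          S.p_mul m _ _
        have h10 : S.p m (z - s) ≤ η := by
          rw [← map_neg_eq_map (S.p m), neg_sub]
          exact le_of_lt hsz
        have h11 : S.p m (star (a - z)) = S.p m (a - z) := S.p_star m _
        have h12 : S.p m (z - s) * S.p m (star (a - z)) ≤ η * S.p m (a - z) := by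
          rw [h11]
          exact mul_le_mul_of_nonneg_right h10 (apply_nonneg _ _)
        linarith
      have h13 : S.p m ((a - z) * star (a - z)) ≤ 0 := by
        have e : (a - z) * star (a - z) = a * star (a - z) - z * star (a - z) := by
          rw [sub_mul]
        calc S.p m ((a - z) * star (a - z))
            ≤ S.p m (a * star (a - z)) + S.p m (z * star (a - z)) := by
              rw [e]
              simpa [sub_eq_add_neg, map_neg_eq_map] using
                map_add_le_add (S.p m) (a * star (a - z)) (-(z * star (a - z)))
          _ = 0 := by rw [h3, h4]; ring
      have h14 : S.p m (a - z) * S.p m (a - z) ≤ 0 := by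
        rw [p_mul_star_self m (a - z)] at h13
        exact h13
      exact mul_self_eq_zero.mp (le_antisymm h14 (mul_self_nonneg _))
    -- conclude membership in the closure
    intro l ε hε
    obtain ⟨s, hsmem, hsz, _⟩ := hext l ε hε
    refine ⟨s, hsmem, ?_⟩
    have e : a - s = (a - z) + (z - s) := by abel
    calc S.p l (a - s) ≤ S.p l (a - z) + S.p l (z - s) := by
          rw [e]
          exact map_add_le_add _ _ _
      _ < ε := by
          rw [hclaim l, zero_add, ← map_neg_eq_map (S.p l), neg_sub]
          exact hsz
  · -- _AI ⊆ 𝒥_X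
    intro a ha
    have haP : ∀ (l : Λ) (ε : ℝ), 0 < ε →
        ∃ s ∈ Submodule.span ℂ (LSet W), S.p l (a - s) < ε := fun l ε hε => ha l ε hε
    refine Set.mem_iInter.mpr fun l => ⟨?_, ?_⟩
    · -- memKlevel
      intro ε hε
      obtain ⟨s, hs, hlt⟩ := haP l ε hε
      refine ⟨C.phi s, span_mem_theta W C hphi hs, ?_⟩
      rw [phi_fun_sub W C hphi]
      calc opSemi W.toHilbertMod l (C.phi (a - s)) ≤ S.p l (a - s) :=
            op_le_of_pb W C hphi (apply_nonneg _ _) (pb_basic W l (a - s))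
        _ < ε := hlt
    · -- annihilation
      intro b hb
      have hPBb : PB W l b 0 := pb_of_op W C hphi le_rfl (le_of_eq hb)
      apply eq_zero_of_le_eta (apply_nonneg _ _) (K := S.p l b)
      intro η hη
      obtain ⟨s, hs, hlt⟩ := haP l η hη
      have h1 : S.p l (s * b) = 0 := by
        have hsb : s * b ∈ Submodule.span ℂ (LSet W) := sp_mulR W hs b
        have hPBsb : PB W l (s * b) (S.p l s * 0) :=
          pb_mul W (apply_nonneg _ _) (pb_basic W l s) hPBb
        rw [mul_zero] at hPBsb
        have h2 := crux W C hphi hsb le_rfl hPBsb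
        have h3 := apply_nonneg (S.p l) (s * b)
        linarith
      have h4 : S.p l (a * b) ≤ S.p l ((a - s) * b) + S.p l (s * b) := by
        have e : a * b = (a - s) * b + s * b := by
          rw [sub_mul, sub_add_cancel]
        rw [e]
        exact map_add_le_add _ _ _
      have h5 : S.p l ((a - s) * b) ≤ S.p l (a - s) * S.p l b := S.p_mul l _ _
      have h6 : S.p l (a - s) * S.p l b ≤ η * S.p l b :=
        mul_le_mul_of_nonneg_right (le_of_lt hlt) (apply_nonneg _ _)
      linarith
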